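/- arXiv:2101.06219 — 8 statements merged into one kernel-verified Lean document; each statement's English description precedes it below -/
import Mathlib

section
/- Let V be a finite-dimensional real inner product space, let K ⊆ V be a set closed under multiplication by nonnegative scalars (a possibly nonconvex cone), let H₀ ∈ V and set H = {x ∈ V : ⟪H₀, x⟫ = 1}. Let J be a convex subset of the convex hull of K which is a face of the convex hull of K. If H ∩ J is nonempty and bounded, then the convex hull of H ∩ K ∩ J equals H ∩ J. -/
open RealInnerProductSpace

lemma face_combo {V : Type*} [NormedAddCommGroup V] [InnerProductSpace ℝ V]
    {A J : Set V} (hA : Convex ℝ A) (hJ : IsExtreme ℝ A J) :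
    ∀ {ι : Type} (s : Finset ι) (w : ι → ℝ) (z : ι → V),
      (∀ i ∈ s, 0 < w i) → (∑ i ∈ s, w i) = 1 → (∀ i ∈ s, z i ∈ A) →
      (∑ i ∈ s, w i • z i) ∈ J → ∀ i ∈ s, z i ∈ J := by
  intro ι s
  classical
  induction s using Finset.induction_on with
  | empty => intro w z _ hsum _ _ i hi; simp at hi
  | @insert a t ha ih =>
    intro w z hpos hsum hzA hmem i hi
    rw [Finset.sum_insert ha] at hsum hmem
    set W : ℝ := ∑ j ∈ t, w j with hW
    have hWnn : (0:ℝ) ≤ W :=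
      Finset.sum_nonneg (fun j hj => (hpos j (Finset.mem_insert_of_mem hj)).le)
    rcases eq_or_lt_of_le hWnn with h0 | h0
    · have ht : t = ∅ := by
        by_contra hne
        have := Finset.sum_pos (fun j hj => hpos j (Finset.mem_insert_of_mem hj))
          (Finset.nonempty_iff_ne_empty.2 hne)
        rw [← hW] at this; linarith
      subst ht
      simp only [Finset.sum_empty] at hsum hmem
      have hwa : w a = 1 := by simpa [← h0] using hsum
      rw [hwa, one_smul] at hmem
      rcases Finset.mem_insert.1 hi with rfl | hit
      · simpa using hmem
      · simp at hit
    · have hwa : 0 < w a := hpos a (Finset.mem_insert_self a t)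
      set y : V := W⁻¹ • ∑ j ∈ t, w j • z j with hy
      have hyeq : y = ∑ j ∈ t, (W⁻¹ * w j) • z j := by
        rw [hy, Finset.smul_sum]; simp [mul_smul]
      have hsum' : (∑ j ∈ t, W⁻¹ * w j) = 1 := by
        rw [← Finset.mul_sum, ← hW, inv_mul_cancel₀ h0.ne']
      have hyA : y ∈ A := by
        rw [hyeq]
        exact hA.sum_mem (fun j hj => mul_nonneg (inv_nonneg.2 hWnn)
            (hpos j (Finset.mem_insert_of_mem hj)).le) hsum'
          (fun j hj => hzA j (Finset.mem_insert_of_mem hj))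
      have hWy : W • y = ∑ j ∈ t, w j • z j := by
        rw [hy, smul_inv_smul₀ h0.ne']
      have hmem' : w a • z a + W • y ∈ J := by rw [hWy]; exact hmem
      have hseg : w a • z a + W • y ∈ openSegment ℝ (z a) y :=
        ⟨w a, W, hwa, h0, hsum, rfl⟩
      have key : z a ∈ J ∧ y ∈ J := ⟨hJ.2 (hzA a (Finset.mem_insert_self a t)) hyA hmem' hseg,
        hJ.right_mem_of_mem_openSegment (hzA a (Finset.mem_insert_self a t)) hyA hmem' hseg⟩
      rcases Finset.mem_insert.1 hi with rfl | hit
      · exact key.1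
      · refine ih (fun j => W⁻¹ * w j) z
          (fun j hj => mul_pos (inv_pos.2 h0) (hpos j (Finset.mem_insert_of_mem hj))) hsum'
          (fun j hj => hzA j (Finset.mem_insert_of_mem hj)) ?_ i hit
        rw [← hyeq]; exact key.2

lemma ray_mem {V : Type*} [NormedAddCommGroup V] [InnerProductSpace ℝ V]
    {K : Set V} (hK : ∀ c : ℝ, 0 ≤ c → ∀ x ∈ K, c • x ∈ K)
    {J : Set V} (hJconv : Convex ℝ J)
    (hJface : IsExtreme ℝ (convexHull ℝ K) J)
    (h0K : (0:V) ∈ K) {k : V} (hkK : k ∈ K) (hkJ : k ∈ J) :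
    ∀ c : ℝ, 0 ≤ c → c • k ∈ J := by
  have claim : ∀ c : ℝ, 1 < c → (0:V) ∈ J ∧ c • k ∈ J := by
    intro c hc
    have hc0 : (0:ℝ) < c := by linarith
    have hck : c • k ∈ convexHull ℝ K := subset_convexHull ℝ K (hK c hc0.le k hkK)
    have h0 : (0:V) ∈ convexHull ℝ K := subset_convexHull ℝ K h0K
    have hseg : k ∈ openSegment ℝ (0:V) (c • k) := by
      refine ⟨1 - c⁻¹, c⁻¹, by simp [inv_lt_one_iff₀, hc], inv_pos.2 hc0, by ring, ?_⟩
      simp [smul_smul, inv_mul_cancel₀ hc0.ne']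
    exact ⟨hJface.2 h0 hck hkJ hseg, hJface.right_mem_of_mem_openSegment h0 hck hkJ hseg⟩
  have h0J : (0:V) ∈ J := (claim 2 one_lt_two).1
  intro c hc
  rcases le_or_gt c 1 with h1 | h1
  · have := hJconv h0J hkJ (by linarith : (0:ℝ) ≤ 1 - c) hc (by ring)
    simpa using this
  · exact (claim c h1).2

theorem stmt_0 {V : Type*} [NormedAddCommGroup V] [InnerProductSpace ℝ V]
    [FiniteDimensional ℝ V]
    (K : Set V) (hK : ∀ c : ℝ, 0 ≤ c → ∀ x ∈ K, c • x ∈ K)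
    (H₀ : V) (J : Set V)
    (hJconv : Convex ℝ J) (hJsub : J ⊆ convexHull ℝ K)
    (hJface : IsExtreme ℝ (convexHull ℝ K) J)
    (hne : ({x : V | ⟪H₀, x⟫ = 1} ∩ J).Nonempty)
    (hbdd : Bornology.IsBounded ({x : V | ⟪H₀, x⟫ = 1} ∩ J)) :
    convexHull ℝ ({x : V | ⟪H₀, x⟫ = 1} ∩ K ∩ J) = {x : V | ⟪H₀, x⟫ = 1} ∩ J := by
  classical
  have hHconv : Convex ℝ {x : V | ⟪H₀, x⟫ = 1} := by
    intro a ha b hb p q hp hq hpq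
    simp only [Set.mem_setOf_eq] at ha hb ⊢
    rw [inner_add_right, real_inner_smul_right, real_inner_smul_right, ha, hb]
    linarith
  apply Set.Subset.antisymm
  · exact convexHull_min (fun x hx => ⟨hx.1.1, hx.2⟩) (hHconv.inter hJconv)
  rintro x ⟨hxH, hxJ⟩
  -- 0 ∈ K
  obtain ⟨x₀, hx₀⟩ := hne
  have hKne : K.Nonempty := by
    by_contra h
    rw [Set.not_nonempty_iff_eq_empty] at h
    have := hJsub hx₀.2
    rw [h, convexHull_empty] at this
    exact this
  obtain ⟨k₀, hk₀⟩ := hKne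
  have h0K : (0:V) ∈ K := by simpa using hK 0 le_rfl k₀ hk₀
  -- representation of x as convex combination of points of K
  have hxK : x ∈ convexHull ℝ K := hJsub hxJ
  rw [convexHull_eq] at hxK
  obtain ⟨ι, t, w, z, hw0, hw1, hzK, hx⟩ := hxK
  rw [Finset.centerMass_eq_of_sum_1 _ _ hw1] at hx
  set t' := t.filter (fun i => 0 < w i) with ht'
  have hsub : t' ⊆ t := Finset.filter_subset _ _
  have hzero : ∀ i ∈ t, i ∉ t' → w i = 0 := by
    intro i hit hnt'
    have h := hw0 i hit
    simp only [ht', Finset.mem_filter, hit, true_and, not_lt] at hnt'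
    linarith
  have hw1' : ∑ i ∈ t', w i = 1 := by
    rw [← hw1]
    exact (Finset.sum_subset hsub (fun i hit hnt' => hzero i hit hnt')).symm ▸ rfl
  have hx' : ∑ i ∈ t', w i • z i = x := by
    rw [← hx]
    exact Finset.sum_subset hsub (fun i hit hnt' => by rw [hzero i hit hnt', zero_smul])
  have hpos : ∀ i ∈ t', 0 < w i := fun i hi => (Finset.mem_filter.1 hi).2
  have hzKt : ∀ i ∈ t', z i ∈ K := fun i hi => hzK i (hsub hi)
  have hzJ : ∀ i ∈ t', z i ∈ J :=
    face_combo (convex_convexHull ℝ K) hJface t' w z hpos hw1'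
      (fun i hi => subset_convexHull ℝ K (hzKt i hi)) (hx' ▸ hxJ)
  -- the inner products
  set θ : ι → ℝ := fun i => ⟪H₀, z i⟫ with hθ
  set P := t'.filter (fun i => 0 < θ i) with hP
  set N := t'.filter (fun i => ¬ 0 < θ i) with hN
  set α : ℝ := ∑ i ∈ P, w i * θ i with hα'
  set β : ℝ := ∑ i ∈ N, w i * θ i with hβ'
  have hinner_sum : ∀ (s : Finset ι), ⟪H₀, ∑ i ∈ s, w i • z i⟫ = ∑ i ∈ s, w i * θ i := by
    intro s
    rw [inner_sum]
    exact Finset.sum_congr rfl fun i _ => real_inner_smul_right _ _ _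
  have hαβ : α + β = 1 := by
    rw [hα', hβ', hP, hN, Finset.sum_filter_add_sum_filter_not, ← hinner_sum, hx']
    exact hxH
  have hβ : β ≤ 0 := Finset.sum_nonpos fun i hi =>
    mul_nonpos_of_nonneg_of_nonpos (hpos i (Finset.filter_subset _ _ hi)).le
      (not_lt.1 (Finset.mem_filter.1 hi).2)
  have hα : 0 < α := by linarith
  set u : V := ∑ i ∈ P, w i • z i with hu
  set w' : V := ∑ i ∈ N, w i • z i with hw'
  have hxuw : u + w' = x := by
    rw [hu, hw', hP, hN, Finset.sum_filter_add_sum_filter_not, hx']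
  have hinu : ⟪H₀, u⟫ = α := hinner_sum P
  have hinw : ⟪H₀, w'⟫ = β := hinner_sum N
  -- the unbounded curve
  have hcurve : ∀ s : ℝ, 0 ≤ s →
      ((1 - (1+s)*β)/α) • u + (1+s) • w' ∈ ({x : V | ⟪H₀, x⟫ = 1} ∩ J) := by
    intro s hs
    set c : ℝ := (1 - (1+s)*β)/α with hc
    have hc0 : 0 ≤ c := by
      apply div_nonneg _ hα.le
      nlinarith
    constructor
    · show ⟪H₀, c • u + (1+s) • w'⟫ = 1
      rw [inner_add_right, real_inner_smul_right, real_inner_smul_right, hinu, hinw, hc]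
      field_simp
      ring
    · have heq : c • u + (1+s) • w' =
          ∑ i ∈ t', w i • (if 0 < θ i then c • z i else (1+s) • z i) := by
        rw [← Finset.sum_filter_add_sum_filter_not t' (fun i => 0 < θ i)
          (fun i => w i • (if 0 < θ i then c • z i else (1+s) • z i))]
        rw [← hP, ← hN]
        congr 1
        · rw [hu, Finset.smul_sum]
          refine Finset.sum_congr rfl fun i hi => ?_
          rw [if_pos (Finset.mem_filter.1 hi).2, smul_comm]
        · rw [hw', Finset.smul_sum]
          refine Finset.sum_congr rfl fun i hi => ?_
          rw [if_neg (Finset.mem_filter.1 hi).2, smul_comm]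
      rw [heq]
      refine hJconv.sum_mem (fun i hi => (hpos i hi).le) hw1' fun i hi => ?_
      split_ifs with h
      · exact ray_mem hK hJconv hJface h0K (hzKt i hi) (hzJ i hi) c hc0
      · exact ray_mem hK hJconv hJface h0K (hzKt i hi) (hzJ i hi) (1+s) (by linarith)
  -- boundedness forces the direction to vanish
  set d : V := (-β/α) • u + w' with hd'
  set z0 : V := ((1-β)/α) • u + w' with hz0'
  have hline : ∀ s : ℝ, ((1 - (1+s)*β)/α) • u + (1+s) • w' = z0 + s • d := by
    intro s
    rw [hz0', hd']
    rw [smul_add, smul_smul, add_smul, one_smul]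
    module
  have hd : d = 0 := by
    by_contra hdne
    obtain ⟨R, hR⟩ := isBounded_iff_forall_norm_le.1 hbdd
    have hdpos : 0 < ‖d‖ := norm_pos_iff.2 hdne
    set s : ℝ := (R + ‖z0‖ + 1)/‖d‖ with hs'
    have hRnn : 0 ≤ R := le_trans (norm_nonneg x₀) (hR x₀ hx₀)
    have hs0 : 0 ≤ s := by positivity
    have hmem := hcurve s hs0
    rw [hline s] at hmem
    have hle := hR _ hmem
    have h1 : ‖s • d‖ ≤ ‖z0 + s • d‖ + ‖z0‖ := by
      have := norm_sub_le (z0 + s • d) z0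
      simpa using this
    rw [norm_smul, Real.norm_eq_abs, abs_of_nonneg hs0, hs', div_mul_cancel₀ _ hdpos.ne'] at h1
    linarith
  have hweq : w' = (β/α) • u := by
    have : (-β/α) • u + w' = 0 := hd ▸ hd'.symm
    have h2 : w' = -((-β/α) • u) := by linear_combination (norm := module) this
    rw [h2]; module
  have hxαu : x = α⁻¹ • u := by
    rw [← hxuw, hweq]
    have : α + β = 1 := hαβ
    match_scalars
    field_simp
    linarith
  -- x is a convex combination of the normalized points
  have hfinal : x = ∑ i ∈ P, (w i * θ i / α) • ((θ i)⁻¹ • z i) := by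
    rw [hxαu, hu, Finset.smul_sum]
    refine Finset.sum_congr rfl fun i hi => ?_
    have hθi : 0 < θ i := (Finset.mem_filter.1 hi).2
    rw [smul_smul, smul_smul]
    congr 1
    field_simp
  rw [hfinal]
  refine (convex_convexHull ℝ _).sum_mem
    (fun i hi => div_nonneg (mul_nonneg (hpos i (Finset.filter_subset _ _ hi)).le
      (Finset.mem_filter.1 hi).2.le) hα.le)
    (by rw [← Finset.sum_div, ← hα', div_self hα.ne']) fun i hi => ?_
  have hiP := hi
  have hit' : i ∈ t' := Finset.filter_subset _ _ hi
  have hθi : 0 < θ i := (Finset.mem_filter.1 hi).2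
  refine subset_convexHull ℝ _ ⟨⟨?_, ?_⟩, ?_⟩
  · show ⟪H₀, (θ i)⁻¹ • z i⟫ = 1
    rw [real_inner_smul_right]
    exact inv_mul_cancel₀ hθi.ne'
  · exact hK _ (inv_nonneg.2 hθi.le) _ (hzKt i hit')
  · exact ray_mem hK hJconv hJface h0K (hzKt i hit') (hzJ i hit') _ (inv_nonneg.2 hθi.le)
end

section
/- Let K₁ ⊆ ℝ^{m₁} and K₂ ⊆ ℝ^{m₂} be nonempty cones, let z₁ ∈ ℝ^{m₁}, z₂ ∈ ℝ^{m₂}, and let Y₁, Y₂ be symmetric real matrices of orders m₁ and m₂ respectively. If the block matrix [[Y₁, z₁],[z₁ᵀ, 1]] belongs to CPP(K₁ × ℝ₊) and the block matrix [[1, z₂ᵀ],[z₂, Y₂]] belongs to CPP(ℝ₊ × K₂), then the (m₁+1+m₂)×(m₁+1+m₂) block matrix [[Y₁, z₁, z₁ z₂ᵀ],[z₁ᵀ, 1, z₂ᵀ],[z₂ z₁ᵀ, z₂, Y₂]] belongs to CPP(K₁ × ℝ₊ × K₂). -/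
open Matrix

/-- `CPP K` is the set of matrices `M` that can be written as a finite sum
`∑ l, v l * (v l)ᵀ` with every `v l ∈ K`. -/
def CPP {d : Type*} (K : Set (d → ℝ)) : Set (Matrix d d ℝ) :=
  {M | ∃ (r : ℕ) (v : Fin r → d → ℝ), (∀ l, v l ∈ K) ∧
    M = ∑ l, Matrix.vecMulVec (v l) (v l)}

/-- The product `A × B` of sets of vectors, realized as block vectors indexed by `p ⊕ q`. -/
def SetProd {p q : Type*} (A : Set (p → ℝ)) (B : Set (q → ℝ)) : Set (p ⊕ q → ℝ) :=
  {v | (fun i => v (Sum.inl i)) ∈ A ∧ (fun j => v (Sum.inr j)) ∈ B}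

/-- A cone: a set closed under multiplication by nonnegative scalars. -/
def IsCone {d : Type*} (K : Set (d → ℝ)) : Prop :=
  ∀ c : ℝ, 0 ≤ c → ∀ x ∈ K, c • x ∈ K

lemma key_sum {r₁ r₂ : ℕ} (f f' : Fin r₁ → ℝ) (g g' : Fin r₂ → ℝ) :
    ∑ p : Fin r₁ × Fin r₂, (f p.1 * g p.2) * (f' p.1 * g' p.2)
      = (∑ l, f l * f' l) * (∑ k, g k * g' k) := by
  rw [Fintype.sum_prod_type, Finset.sum_mul_sum]
  exact Finset.sum_congr rfl fun l _ => Finset.sum_congr rfl fun k _ => by ring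

theorem stmt_5 (m₁ m₂ : ℕ)
    (K₁ : Set (Fin m₁ → ℝ)) (K₂ : Set (Fin m₂ → ℝ))
    (hK₁ : IsCone K₁) (hK₂ : IsCone K₂) (hne₁ : K₁.Nonempty) (hne₂ : K₂.Nonempty)
    (z₁ : Fin m₁ → ℝ) (z₂ : Fin m₂ → ℝ)
    (Y₁ : Matrix (Fin m₁) (Fin m₁) ℝ) (hY₁ : Y₁.IsSymm)
    (Y₂ : Matrix (Fin m₂) (Fin m₂) ℝ) (hY₂ : Y₂.IsSymm)
    (h1 : Matrix.fromBlocks Y₁ (Matrix.of fun i (_ : Fin 1) => z₁ i)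
        (Matrix.of fun (_ : Fin 1) j => z₁ j) (Matrix.of fun _ _ => (1 : ℝ))
        ∈ CPP (SetProd K₁ {v : Fin 1 → ℝ | 0 ≤ v 0}))
    (h2 : Matrix.fromBlocks (Matrix.of fun (_ _ : Fin 1) => (1 : ℝ))
        (Matrix.of fun (_ : Fin 1) j => z₂ j) (Matrix.of fun i (_ : Fin 1) => z₂ i) Y₂
        ∈ CPP (SetProd {v : Fin 1 → ℝ | 0 ≤ v 0} K₂)) :
    Matrix.fromBlocks
      (Matrix.fromBlocks Y₁ (Matrix.of fun i (_ : Fin 1) => z₁ i)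
        (Matrix.of fun (_ : Fin 1) j => z₁ j) (Matrix.of fun _ _ => (1 : ℝ)))
      (Matrix.of fun i j => Sum.elim (fun a => z₁ a * z₂ j) (fun _ => z₂ j) i)
      (Matrix.of fun i j => Sum.elim (fun a => z₂ i * z₁ a) (fun _ => z₂ i) j)
      Y₂
      ∈ CPP (SetProd (SetProd K₁ {v : Fin 1 → ℝ | 0 ≤ v 0}) K₂) := by
  
  obtain ⟨r₁, v₁, hv₁, hM₁⟩ := h1
  obtain ⟨r₂, v₂, hv₂, hM₂⟩ := h2
  set x : Fin r₁ → Fin m₁ → ℝ := fun l i => v₁ l (Sum.inl i) with hxdef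
  set s : Fin r₁ → ℝ := fun l => v₁ l (Sum.inr 0) with hsdef
  set t : Fin r₂ → ℝ := fun k => v₂ k (Sum.inl 0) with htdef
  set y : Fin r₂ → Fin m₂ → ℝ := fun k j => v₂ k (Sum.inr j) with hydef
  have e1 : ∀ a b, (Matrix.fromBlocks Y₁ (Matrix.of fun i (_ : Fin 1) => z₁ i)
      (Matrix.of fun (_ : Fin 1) j => z₁ j) (Matrix.of fun _ _ => (1 : ℝ))) a b
      = ∑ l, v₁ l a * v₁ l b := by
    intro a b
    rw [hM₁, Matrix.sum_apply]
    simp [Matrix.vecMulVec_apply]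
  have e2 : ∀ a b, (Matrix.fromBlocks (Matrix.of fun (_ _ : Fin 1) => (1 : ℝ))
      (Matrix.of fun (_ : Fin 1) j => z₂ j) (Matrix.of fun i (_ : Fin 1) => z₂ i) Y₂) a b
      = ∑ k, v₂ k a * v₂ k b := by
    intro a b
    rw [hM₂, Matrix.sum_apply]
    simp [Matrix.vecMulVec_apply]
  have hone1 : ∑ l, s l * s l = 1 := by
    have := e1 (Sum.inr 0) (Sum.inr 0); simp [Matrix.fromBlocks] at this
    exact this.symm
  have hone2 : ∑ k, t k * t k = 1 := by
    have := e2 (Sum.inl 0) (Sum.inl 0); simp [Matrix.fromBlocks] at this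
    exact this.symm
  have hz1 : ∀ i, z₁ i = ∑ l, x l i * s l := by
    intro i; have := e1 (Sum.inl i) (Sum.inr 0); simpa [Matrix.fromBlocks] using this
  have hz1' : ∀ i, z₁ i = ∑ l, s l * x l i := by
    intro i; rw [hz1 i]; exact Finset.sum_congr rfl fun l _ => mul_comm _ _
  have hz2 : ∀ j, z₂ j = ∑ k, t k * y k j := by
    intro j; have := e2 (Sum.inl 0) (Sum.inr j); simpa [Matrix.fromBlocks] using this
  have hz2' : ∀ j, z₂ j = ∑ k, y k j * t k := by
    intro j; rw [hz2 j]; exact Finset.sum_congr rfl fun k _ => mul_comm _ _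
  have hY1e : ∀ i i', Y₁ i i' = ∑ l, x l i * x l i' := by
    intro i i'; have := e1 (Sum.inl i) (Sum.inl i'); simpa [Matrix.fromBlocks] using this
  have hY2e : ∀ j j', Y₂ j j' = ∑ k, y k j * y k j' := by
    intro j j'; have := e2 (Sum.inr j) (Sum.inr j'); simpa [Matrix.fromBlocks] using this
  have hsnn : ∀ l, 0 ≤ s l := fun l => (hv₁ l).2
  have htnn : ∀ k, 0 ≤ t k := fun k => (hv₂ k).1
  refine ⟨r₁ * r₂, fun l =>
      Sum.elim
        (Sum.elim (fun i => x (finProdFinEquiv.symm l).1 i * t (finProdFinEquiv.symm l).2)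
          (fun _ => s (finProdFinEquiv.symm l).1 * t (finProdFinEquiv.symm l).2))
        (fun j => s (finProdFinEquiv.symm l).1 * y (finProdFinEquiv.symm l).2 j), ?_, ?_⟩
  · intro l
    set p := finProdFinEquiv.symm l with hp
    refine ⟨⟨?_, ?_⟩, ?_⟩
    · have h := hK₁ (t p.2) (htnn p.2) _ (hv₁ p.1).1
      have e : (t p.2 • fun i => v₁ p.1 (Sum.inl i)) = (fun i : Fin m₁ => x p.1 i * t p.2) := by
        funext i; simp [hxdef, mul_comm]
      rw [e] at h
      exact h
    · exact mul_nonneg (hsnn p.1) (htnn p.2)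
    · have h := hK₂ (s p.1) (hsnn p.1) _ (hv₂ p.2).2
      have e : (s p.1 • fun j => v₂ p.2 (Sum.inr j)) = (fun j : Fin m₂ => s p.1 * y p.2 j) := by
        funext j; simp [hydef]
      rw [e] at h
      exact h
  · ext a b
    rw [Matrix.sum_apply]
    rw [← Equiv.sum_comp finProdFinEquiv
      (fun l => Matrix.vecMulVec
        (Sum.elim (Sum.elim (fun i => x (finProdFinEquiv.symm l).1 i * t (finProdFinEquiv.symm l).2)
          (fun _ => s (finProdFinEquiv.symm l).1 * t (finProdFinEquiv.symm l).2))
          (fun j => s (finProdFinEquiv.symm l).1 * y (finProdFinEquiv.symm l).2 j))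
        (Sum.elim (Sum.elim (fun i => x (finProdFinEquiv.symm l).1 i * t (finProdFinEquiv.symm l).2)
          (fun _ => s (finProdFinEquiv.symm l).1 * t (finProdFinEquiv.symm l).2))
          (fun j => s (finProdFinEquiv.symm l).1 * y (finProdFinEquiv.symm l).2 j)) a b)]
    simp only [Equiv.symm_apply_apply, Matrix.vecMulVec_apply]
    rcases a with (i | c) | j <;> rcases b with (i' | c') | j' <;>
      simp only [Sum.elim_inl, Sum.elim_inr, Matrix.fromBlocks_apply₁₁,
        Matrix.fromBlocks_apply₁₂, Matrix.fromBlocks_apply₂₁, Matrix.fromBlocks_apply₂₂,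
        Matrix.of_apply]
    · rw [key_sum (fun l => x l i) (fun l => x l i') t t, hone2, mul_one, hY1e]
    · rw [key_sum (fun l => x l i) s t t, hone2, mul_one, ← hz1]
    · rw [key_sum (fun l => x l i) s t (fun k => y k j'), ← hz1, ← hz2]
    · rw [key_sum s (fun l => x l i') t t, hone2, mul_one, ← hz1']
    · rw [key_sum s s t t, hone1, hone2, mul_one]
    · rw [key_sum s s t (fun k => y k j'), hone1, one_mul, ← hz2]
    · rw [key_sum s (fun l => x l i') (fun k => y k j) t, ← hz1', ← hz2', mul_comm]
    · rw [key_sum s s (fun k => y k j) t, hone1, one_mul, ← hz2']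
    · rw [key_sum s s (fun k => y k j) (fun k => y k j'), hone1, one_mul, hY2e]
end

section
/- Let S, n₂ ≥ 1, let K₁,…,K_S ⊆ ℝ^{n₂} be nonempty cones, and for each i ∈ {1,…,S} let z_i ∈ ℝ^{n₂} and let Y_i be a symmetric n₂×n₂ real matrix such that the block matrix [[1, z_iᵀ],[z_i, Y_i]] belongs to CPP(ℝ₊ × K_i). Then there exists a symmetric (1+Sn₂)×(1+Sn₂) real matrix M ∈ CPP(ℝ₊ × K₁ × ⋯ × K_S), with index set partitioned into one block of size 1 and S blocks of size n₂, whose (0,0) entry equals 1, whose (i,0) block equals z_i and whose (i,i) diagonal block equals Y_i for every i ∈ {1,…,S}. -/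
open Matrix

/-- Auxiliary: interchange of a sum over a dependent product of `Fin` types
with a product of sums. -/
lemma sum_prod_univ_aux {S : ℕ} {r : Fin S → ℕ} (f : ∀ i, Fin (r i) → ℝ) :
    ∑ L : ((i : Fin S) → Fin (r i)), ∏ i, f i (L i) = ∏ i, ∑ l, f i l := by
  rw [Finset.prod_univ_sum, Fintype.piFinset_univ]

theorem stmt_6 (S n₂ : ℕ) (hS : 1 ≤ S) (hn : 1 ≤ n₂)
    (Ki : Fin S → Set (Fin n₂ → ℝ)) (hKi : ∀ i, IsCone (Ki i))
    (hne : ∀ i, (Ki i).Nonempty)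
    (z : Fin S → Fin n₂ → ℝ)
    (Y : Fin S → Matrix (Fin n₂) (Fin n₂) ℝ) (hY : ∀ i, (Y i).IsSymm)
    (h : ∀ i, Matrix.fromBlocks (Matrix.of fun (_ _ : Fin 1) => (1 : ℝ))
        (Matrix.of fun (_ : Fin 1) j => z i j) (Matrix.of fun a (_ : Fin 1) => z i a) (Y i)
        ∈ CPP (SetProd {v : Fin 1 → ℝ | 0 ≤ v 0} (Ki i))) :
    ∃ M : Matrix (Fin 1 ⊕ Fin S × Fin n₂) (Fin 1 ⊕ Fin S × Fin n₂) ℝ,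
      M.IsSymm ∧
      M ∈ CPP {v : Fin 1 ⊕ Fin S × Fin n₂ → ℝ |
        0 ≤ v (Sum.inl 0) ∧ ∀ s, (fun j => v (Sum.inr (s, j))) ∈ Ki s} ∧
      M (Sum.inl 0) (Sum.inl 0) = 1 ∧
      (∀ s j, M (Sum.inr (s, j)) (Sum.inl 0) = z s j) ∧
      (∀ s a b, M (Sum.inr (s, a)) (Sum.inr (s, b)) = Y s a b) := by
  classical
  choose r v hmem heq using h
  -- components of the decomposition vectors
  set t : ∀ i, Fin (r i) → ℝ := fun i l => v i l (Sum.inl 0) with ht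
  set w : ∀ i, Fin (r i) → Fin n₂ → ℝ := fun i l j => v i l (Sum.inr j) with hw
  have ht0 : ∀ i l, 0 ≤ t i l := fun i l => (hmem i l).1
  have hwK : ∀ i l, w i l ∈ Ki i := fun i l => (hmem i l).2
  -- entrywise consequences of the block decompositions
  have entry : ∀ i a b, Matrix.fromBlocks (Matrix.of fun (_ _ : Fin 1) => (1 : ℝ))
      (Matrix.of fun (_ : Fin 1) j => z i j) (Matrix.of fun a (_ : Fin 1) => z i a) (Y i) a b
      = ∑ l, v i l a * v i l b := by
    intro i a b
    rw [heq i]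
    simp [Matrix.sum_apply, Matrix.vecMulVec_apply]
  have h00 : ∀ i, ∑ l, t i l * t i l = 1 := by
    intro i
    have := entry i (Sum.inl 0) (Sum.inl 0)
    simpa using this.symm
  have hz : ∀ i j, ∑ l, w i l j * t i l = z i j := by
    intro i j
    have := entry i (Sum.inr j) (Sum.inl 0)
    simpa using this.symm
  have hYe : ∀ i a b, ∑ l, w i l a * w i l b = Y i a b := by
    intro i a b
    have := entry i (Sum.inr a) (Sum.inr b)
    simpa using this.symm
  -- the combined vectors, indexed by tuples of indices
  set u : ((i : Fin S) → Fin (r i)) → (Fin 1 ⊕ Fin S × Fin n₂) → ℝ := fun L k =>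
    Sum.rec (fun _ => ∏ i, t i (L i))
      (fun p => (∏ i ∈ Finset.univ.erase p.1, t i (L i)) * w p.1 (L p.1) p.2) k with hu
  have hu_inl : ∀ L, u L (Sum.inl 0) = ∏ i, t i (L i) := fun L => rfl
  have hu_inr : ∀ L (s : Fin S) j,
      u L (Sum.inr (s, j)) = (∏ i ∈ Finset.univ.erase s, t i (L i)) * w s (L s) j :=
    fun _ _ _ => rfl
  set M : Matrix (Fin 1 ⊕ Fin S × Fin n₂) (Fin 1 ⊕ Fin S × Fin n₂) ℝ :=
    ∑ L : ((i : Fin S) → Fin (r i)), Matrix.vecMulVec (u L) (u L) with hM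
  refine ⟨M, ?_, ?_, ?_, ?_, ?_⟩
  · -- symmetry
    rw [Matrix.IsSymm, hM, Matrix.transpose_sum]
    refine Finset.sum_congr rfl fun L _ => ?_
    ext a b
    simp [Matrix.vecMulVec_apply, mul_comm]
  · -- membership in CPP
    refine ⟨Fintype.card ((i : Fin S) → Fin (r i)),
      fun l => u ((Fintype.equivFin ((i : Fin S) → Fin (r i))).symm l), fun l => ?_, ?_⟩
    · constructor
      · show 0 ≤ u ((Fintype.equivFin ((i : Fin S) → Fin (r i))).symm l) (Sum.inl 0)
        rw [hu_inl]
        exact Finset.prod_nonneg fun i _ => ht0 i _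
      · intro s
        show (fun j => u ((Fintype.equivFin ((i : Fin S) → Fin (r i))).symm l)
          (Sum.inr (s, j))) ∈ Ki s
        have heq2 : (fun j => u ((Fintype.equivFin ((i : Fin S) → Fin (r i))).symm l)
              (Sum.inr (s, j)))
            = (∏ i ∈ Finset.univ.erase s,
                t i ((Fintype.equivFin ((i : Fin S) → Fin (r i))).symm l i)) •
              w s ((Fintype.equivFin ((i : Fin S) → Fin (r i))).symm l s) := by
          funext j
          rw [hu_inr]
          simp [smul_eq_mul]
        rw [heq2]
        exact hKi s _ (Finset.prod_nonneg fun i _ => ht0 i _) _ (hwK s _)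
    · rw [hM]
      exact (Equiv.sum_comp (Fintype.equivFin ((i : Fin S) → Fin (r i))).symm
        (fun L => Matrix.vecMulVec (u L) (u L))).symm
  · -- (0,0) entry
    rw [hM, Matrix.sum_apply]
    have key : ∀ L, Matrix.vecMulVec (u L) (u L) (Sum.inl 0) (Sum.inl 0)
        = ∏ i, (t i (L i) * t i (L i)) := by
      intro L
      rw [Matrix.vecMulVec_apply, hu_inl, ← Finset.prod_mul_distrib]
    rw [Finset.sum_congr rfl fun L _ => key L,
      sum_prod_univ_aux (fun i l => t i l * t i l)]
    simp [h00]
  · -- the (s,0) blocks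
    intro s j
    rw [hM, Matrix.sum_apply]
    set F : ∀ i, Fin (r i) → ℝ :=
      Function.update (fun i l => t i l * t i l) s (fun l => w s l j * t s l) with hF
    have hF1 : ∀ l, F s l = w s l j * t s l := fun l => by
      rw [hF, Function.update_self]
    have hF2 : ∀ b, b ≠ s → ∀ l, F b l = t b l * t b l := fun b hb l => by
      rw [hF, Function.update_of_ne hb]
    have key : ∀ L, Matrix.vecMulVec (u L) (u L) (Sum.inr (s, j)) (Sum.inl 0)
        = ∏ i, F i (L i) := by
      intro L
      rw [Matrix.vecMulVec_apply, hu_inr, hu_inl,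
        ← Finset.mul_prod_erase Finset.univ (fun i => t i (L i)) (Finset.mem_univ s),
        ← Finset.mul_prod_erase Finset.univ (fun i => F i (L i)) (Finset.mem_univ s),
        hF1 (L s),
        Finset.prod_congr rfl (fun i hi => hF2 i (Finset.ne_of_mem_erase hi) (L i)),
        Finset.prod_mul_distrib]
      ring
    rw [Finset.sum_congr rfl fun L _ => key L, sum_prod_univ_aux F,
      Finset.prod_eq_single s (fun b _ hb => by
        rw [Finset.sum_congr rfl fun l _ => hF2 b hb l]; exact h00 b)
        (fun hs => absurd (Finset.mem_univ s) hs),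
      Finset.sum_congr rfl fun l _ => hF1 l]
    exact hz s j
  · -- the (s,s) diagonal blocks
    intro s a b
    rw [hM, Matrix.sum_apply]
    set F : ∀ i, Fin (r i) → ℝ :=
      Function.update (fun i l => t i l * t i l) s (fun l => w s l a * w s l b) with hF
    have hF1 : ∀ l, F s l = w s l a * w s l b := fun l => by
      rw [hF, Function.update_self]
    have hF2 : ∀ b', b' ≠ s → ∀ l, F b' l = t b' l * t b' l := fun b' hb l => by
      rw [hF, Function.update_of_ne hb]
    have key : ∀ L, Matrix.vecMulVec (u L) (u L) (Sum.inr (s, a)) (Sum.inr (s, b))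
        = ∏ i, F i (L i) := by
      intro L
      rw [Matrix.vecMulVec_apply, hu_inr, hu_inr,
        ← Finset.mul_prod_erase Finset.univ (fun i => F i (L i)) (Finset.mem_univ s),
        hF1 (L s),
        Finset.prod_congr rfl (fun i hi => hF2 i (Finset.ne_of_mem_erase hi) (L i)),
        Finset.prod_mul_distrib]
      ring
    rw [Finset.sum_congr rfl fun L _ => key L, sum_prod_univ_aux F,
      Finset.prod_eq_single s (fun b' _ hb => by
        rw [Finset.sum_congr rfl fun l _ => hF2 b' hb l]; exact h00 b')
        (fun hs => absurd (Finset.mem_univ s) hs),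
      Finset.sum_congr rfl fun l _ => hF1 l]
    exact hYe s a b
end

section
/- Let n₁, n₂, S ≥ 1, fix k ∈ {1,…,n₁}, and let K₁,…,K_S ⊆ ℝ^{n₂} be nonempty cones. Let x ∈ ℝ and, for each i ∈ {1,…,S}, let z_i ∈ ℝ^{n₂} and let Y_i be a symmetric n₂×n₂ real matrix such that the block matrix [[x, z_iᵀ],[z_i, Y_i]] belongs to CPP(ℝ₊ × K_i). Then the connected component (x e_k e_kᵀ, (z_i e_kᵀ, Y_i)_{i=1}^S), where e_k denotes the k-th standard basis vector of ℝ^{n₁}, belongs to CMP(ℝ^{n₁}₊, K₁,…,K_S), where ℝ^{n₁}₊ is the nonnegative orthant of ℝ^{n₁}. -/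
open Matrix

/-- The cone `CMP(K₀, K₁, …, K_S)` of completable, completely positive connected
components: the convex hull of the tuples
`(x xᵀ, (y_i xᵀ, y_i y_iᵀ)_{i})` with `x ∈ K₀` and `y_i ∈ K_i`. -/
def CMP {ι₀ ι₁ : Type*} {S : ℕ} (K₀ : Set (ι₀ → ℝ)) (Ki : Fin S → Set (ι₁ → ℝ)) :
    Set (Matrix ι₀ ι₀ ℝ × (Fin S → Matrix ι₁ ι₀ ℝ × Matrix ι₁ ι₁ ℝ)) :=
  convexHull ℝ {T | ∃ x ∈ K₀, ∃ y : Fin S → ι₁ → ℝ, (∀ i, y i ∈ Ki i) ∧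
    T = (Matrix.vecMulVec x x,
      fun i => (Matrix.vecMulVec (y i) x, Matrix.vecMulVec (y i) (y i)))}

lemma aux_sum_mem_convexHull {E : Type*} [AddCommGroup E] [Module ℝ E] {G : Set E}
    (hG : ∀ c : ℝ, 0 ≤ c → ∀ g ∈ G, c • g ∈ G) (h0 : (0:E) ∈ G)
    {ι : Type*} [Fintype ι] (g : ι → E) (hg : ∀ j, g j ∈ G) :
    (∑ j, g j) ∈ convexHull ℝ G := by
  rcases isEmpty_or_nonempty ι with hI | hI
  · simpa using subset_convexHull ℝ G h0
  · have hcard : (0:ℝ) < (Fintype.card ι : ℝ) := by exact_mod_cast Fintype.card_pos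
    have hmem := Finset.centerMass_mem_convexHull (Finset.univ : Finset ι)
      (w := fun _ => (1:ℝ)) (by intro i _; norm_num) (by simp [hcard])
      (z := fun j => (Fintype.card ι : ℝ) • g j)
      (fun j _ => hG _ hcard.le _ (hg j))
    have heq : (Finset.univ : Finset ι).centerMass (fun _ => (1:ℝ))
        (fun j => (Fintype.card ι : ℝ) • g j) = ∑ j, g j := by
      rw [Finset.centerMass]
      simp only [one_smul, Finset.sum_const, nsmul_eq_mul, mul_one]
      rw [← Finset.smul_sum, smul_smul, Finset.card_univ,
        inv_mul_cancel₀ hcard.ne', one_smul]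
    rwa [heq] at hmem


theorem stmt_8 (n₁ n₂ S : ℕ) (h₁ : 1 ≤ n₁) (h₂ : 1 ≤ n₂) (hS : 1 ≤ S)
    (k : Fin n₁)
    (Ki : Fin S → Set (Fin n₂ → ℝ)) (hKi : ∀ i, IsCone (Ki i))
    (hne : ∀ i, (Ki i).Nonempty)
    (x : ℝ) (z : Fin S → Fin n₂ → ℝ)
    (Y : Fin S → Matrix (Fin n₂) (Fin n₂) ℝ) (hY : ∀ i, (Y i).IsSymm)
    (h : ∀ i, Matrix.fromBlocks (Matrix.of fun (_ _ : Fin 1) => x)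
        (Matrix.of fun (_ : Fin 1) j => z i j) (Matrix.of fun a (_ : Fin 1) => z i a) (Y i)
        ∈ CPP (SetProd {v : Fin 1 → ℝ | 0 ≤ v 0} (Ki i))) :
    (x • Matrix.vecMulVec (Pi.single k 1 : Fin n₁ → ℝ) (Pi.single k 1),
      fun i => (Matrix.vecMulVec (z i) (Pi.single k 1 : Fin n₁ → ℝ), Y i))
      ∈ CMP {v : Fin n₁ → ℝ | ∀ a, 0 ≤ v a} Ki := by
  classical
  -- zero vector is in each cone
  have h0K : ∀ i, (0 : Fin n₂ → ℝ) ∈ Ki i := by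
    intro i
    obtain ⟨y0, hy0⟩ := hne i
    simpa using hKi i 0 le_rfl y0 hy0
  -- extract CPP decompositions
  choose r v hvmem hM using h
  set t : ∀ i, Fin (r i) → ℝ := fun i l => v i l (Sum.inl 0) with ht_def
  set w : ∀ i, Fin (r i) → Fin n₂ → ℝ := fun i l j => v i l (Sum.inr j) with hw_def
  have ht0 : ∀ i l, 0 ≤ t i l := fun i l => (hvmem i l).1
  have hwK : ∀ i l, w i l ∈ Ki i := fun i l => (hvmem i l).2
  have hx : ∀ i, x = ∑ l, t i l * t i l := by
    intro i
    have := congrFun (congrFun (hM i) (Sum.inl 0)) (Sum.inl 0)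
    simpa [Matrix.sum_apply, Matrix.vecMulVec_apply] using this
  have hz : ∀ i a, z i a = ∑ l, t i l * w i l a := by
    intro i a
    have := congrFun (congrFun (hM i) (Sum.inl 0)) (Sum.inr a)
    simpa [Matrix.sum_apply, Matrix.vecMulVec_apply] using this
  have hYe : ∀ i a b, Y i a b = ∑ l, w i l a * w i l b := by
    intro i a b
    have := congrFun (congrFun (hM i) (Sum.inr a)) (Sum.inr b)
    simpa [Matrix.sum_apply, Matrix.vecMulVec_apply] using this
  have hxnn : 0 ≤ x := by
    rw [hx ⟨0, hS⟩]; exact Finset.sum_nonneg fun l _ => mul_self_nonneg _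
  have htzero : x = 0 → ∀ i l, t i l = 0 := by
    intro h0 i l
    have hs : ∑ l, t i l * t i l = 0 := by rw [← hx i, h0]
    exact mul_self_eq_zero.mp
      ((Finset.sum_eq_zero_iff_of_nonneg (fun l _ => mul_self_nonneg (t i l))).1 hs l
        (Finset.mem_univ l))
  -- the scaling data
  set c : ℝ := x ^ (S - 1) with hc_def
  have hcnn : 0 ≤ c := pow_nonneg hxnn _
  set m : (∀ j, Fin (r j)) → ℝ := fun L => (∏ j, t j (L j) * t j (L j)) / c with hm_def
  have hmnn : ∀ L, 0 ≤ m L :=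
    fun L => div_nonneg (Finset.prod_nonneg fun j _ => mul_self_nonneg _) hcnn
  set sq : (∀ j, Fin (r j)) → ℝ := fun L => Real.sqrt (m L) with hsq_def
  have hss : ∀ L, sq L * sq L = m L := fun L => Real.mul_self_sqrt (hmnn L)
  -- the key product-sum computation
  have key : ∀ (i : Fin S) (H : ∀ j, Fin (r j) → ℝ),
      (∀ j, j ≠ i → ∀ l, H j l = t j l * t j l) →
      ∑ L : ∀ j, Fin (r j), ∏ j, H j (L j) = (∑ l, H i l) * x ^ (S - 1) := by
    intro i H hH
    rw [← Fintype.prod_sum]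
    rw [← Finset.mul_prod_erase Finset.univ _ (Finset.mem_univ i)]
    congr 1
    calc ∏ j ∈ Finset.univ.erase i, ∑ l, H j l
        = ∏ _j ∈ Finset.univ.erase i, x := by
          refine Finset.prod_congr rfl fun j hj => ?_
          rw [Finset.sum_congr rfl fun l _ => hH j (Finset.ne_of_mem_erase hj) l, ← hx j]
      _ = x ^ (S - 1) := by
          rw [Finset.prod_const, Finset.card_erase_of_mem (Finset.mem_univ i),
            Finset.card_univ, Fintype.card_fin]
  -- sum of masses
  have hsum1 : ∑ L : ∀ j, Fin (r j), m L = x := by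
    rw [hm_def, ← Finset.sum_div,
      key ⟨0, hS⟩ (fun j l => t j l * t j l) (fun _ _ _ => rfl), ← hx ⟨0, hS⟩]
    rcases eq_or_ne x 0 with h0 | h0
    · simp [h0, hc_def]
    · rw [hc_def]; exact mul_div_cancel_right₀ x (pow_ne_zero _ h0)
  -- the Z sums
  have hsumZ : ∀ (i : Fin S) (a : Fin n₂),
      ∑ L : ∀ j, Fin (r j), m L / t i (L i) * w i (L i) a = z i a := by
    intro i a
    have hpt : ∀ L : ∀ j, Fin (r j),
        m L / t i (L i) * w i (L i) a
          = (∏ j, (if j = i then t j (L j) * w j (L j) a else t j (L j) * t j (L j))) / c := by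
      intro L
      have e1 : (∏ j, t j (L j) * t j (L j))
          = (t i (L i) * t i (L i)) * ∏ j ∈ Finset.univ.erase i, t j (L j) * t j (L j) :=
        (Finset.mul_prod_erase Finset.univ _ (Finset.mem_univ i)).symm
      have e2 : (∏ j, (if j = i then t j (L j) * w j (L j) a else t j (L j) * t j (L j)))
          = (t i (L i) * w i (L i) a) * ∏ j ∈ Finset.univ.erase i, t j (L j) * t j (L j) := by
        rw [← Finset.mul_prod_erase Finset.univ _ (Finset.mem_univ i), if_pos rfl]
        congr 1
        exact Finset.prod_congr rfl fun j hj => if_neg (Finset.ne_of_mem_erase hj)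
      simp only [hm_def]
      rw [e1, e2]
      set P := ∏ j ∈ Finset.univ.erase i, t j (L j) * t j (L j)
      set tt := t i (L i)
      rcases eq_or_ne tt 0 with h0 | h0
      · simp [h0]
      · rcases eq_or_ne c 0 with hc0 | hc0
        · simp [hc0]
        · field_simp
    rw [Finset.sum_congr rfl fun L _ => hpt L, ← Finset.sum_div,
      key i (fun j l => if j = i then t j l * w j l a else t j l * t j l)
        (fun j hj l => if_neg hj),
      Finset.sum_congr rfl fun (l : Fin (r i)) _ => if_pos rfl, ← hz i a]
    rcases eq_or_ne x 0 with h0 | h0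
    · have hza : z i a = 0 := by
        rw [hz i a]
        exact Finset.sum_eq_zero fun l _ => by rw [htzero h0 i l, zero_mul]
      simp [hza]
    · rw [hc_def]; exact mul_div_cancel_right₀ _ (pow_ne_zero _ h0)
  -- the Y sums, part 1
  have hsumY1 : ∀ (i : Fin S) (a b : Fin n₂),
      ∑ L : ∀ j, Fin (r j), m L / (t i (L i) * t i (L i)) * (w i (L i) a * w i (L i) b)
        = (∑ l, if t i l = 0 then 0 else w i l a * w i l b) * x ^ (S - 1) / c := by
    intro i a b
    have hpt : ∀ L : ∀ j, Fin (r j),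
        m L / (t i (L i) * t i (L i)) * (w i (L i) a * w i (L i) b)
          = (∏ j, (if j = i then (if t j (L j) = 0 then 0 else w j (L j) a * w j (L j) b)
              else t j (L j) * t j (L j))) / c := by
      intro L
      have e1 : (∏ j, t j (L j) * t j (L j))
          = (t i (L i) * t i (L i)) * ∏ j ∈ Finset.univ.erase i, t j (L j) * t j (L j) :=
        (Finset.mul_prod_erase Finset.univ _ (Finset.mem_univ i)).symm
      have e2 : (∏ j, (if j = i then (if t j (L j) = 0 then 0 else w j (L j) a * w j (L j) b)
              else t j (L j) * t j (L j)))
          = (if t i (L i) = 0 then 0 else w i (L i) a * w i (L i) b)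
              * ∏ j ∈ Finset.univ.erase i, t j (L j) * t j (L j) := by
        rw [← Finset.mul_prod_erase Finset.univ _ (Finset.mem_univ i), if_pos rfl]
        congr 1
        exact Finset.prod_congr rfl fun j hj => if_neg (Finset.ne_of_mem_erase hj)
      simp only [hm_def]
      rw [e1, e2]
      set P := ∏ j ∈ Finset.univ.erase i, t j (L j) * t j (L j)
      set tt := t i (L i)
      rcases eq_or_ne tt 0 with h0 | h0
      · simp [h0]
      · rw [if_neg h0]
        rcases eq_or_ne c 0 with hc0 | hc0
        · simp [hc0]
        · field_simp
    rw [Finset.sum_congr rfl fun L _ => hpt L, ← Finset.sum_div,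
      key i (fun j l => if j = i then (if t j l = 0 then 0 else w j l a * w j l b)
        else t j l * t j l) (fun j hj l => if_neg hj),
      Finset.sum_congr rfl fun (l : Fin (r i)) _ => if_pos rfl]
  -- nonnegativity of basis vector entries
  have hsingle : ∀ a : Fin n₁, (0:ℝ) ≤ (Pi.single k 1 : Fin n₁ → ℝ) a := by
    intro a
    rcases eq_or_ne a k with rfl | ha
    · simp
    · simp [Pi.single_eq_of_ne ha]
  have hsqnn : ∀ L, 0 ≤ sq L := fun L => Real.sqrt_nonneg _
  -- the generators
  set xv : (∀ j, Fin (r j)) → Fin n₁ → ℝ := fun L a' => sq L * (Pi.single k 1 : Fin n₁ → ℝ) a' with hxv_def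
  set yv : (∀ j, Fin (r j)) → ∀ i : Fin S, Fin n₂ → ℝ :=
    fun L i b' => sq L / t i (L i) * w i (L i) b' with hyv_def
  set yw : (Σ j : Fin S, Fin (r j)) → ∀ jj : Fin S, Fin n₂ → ℝ :=
    fun q jj b' => if jj = q.1 ∧ t q.1 q.2 = 0 then w q.1 q.2 b' else 0 with hyw_def
  set g1 : (∀ j, Fin (r j)) →
      Matrix (Fin n₁) (Fin n₁) ℝ × (Fin S → Matrix (Fin n₂) (Fin n₁) ℝ × Matrix (Fin n₂) (Fin n₂) ℝ) :=
    fun L => (vecMulVec (xv L) (xv L),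
      fun i => (vecMulVec (yv L i) (xv L), vecMulVec (yv L i) (yv L i))) with hg1_def
  set g2 : (Σ j : Fin S, Fin (r j)) →
      Matrix (Fin n₁) (Fin n₁) ℝ × (Fin S → Matrix (Fin n₂) (Fin n₁) ℝ × Matrix (Fin n₂) (Fin n₂) ℝ) :=
    fun q => (vecMulVec (0 : Fin n₁ → ℝ) (0 : Fin n₁ → ℝ),
      fun jj => (vecMulVec (yw q jj) (0 : Fin n₁ → ℝ), vecMulVec (yw q jj) (yw q jj))) with hg2_def
  -- the generating set
  set Gset : Set (Matrix (Fin n₁) (Fin n₁) ℝ ×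
      (Fin S → Matrix (Fin n₂) (Fin n₁) ℝ × Matrix (Fin n₂) (Fin n₂) ℝ)) :=
    {T | ∃ x0 ∈ {v : Fin n₁ → ℝ | ∀ a, 0 ≤ v a}, ∃ y : Fin S → Fin n₂ → ℝ,
      (∀ i, y i ∈ Ki i) ∧
      T = (Matrix.vecMulVec x0 x0,
        fun i => (Matrix.vecMulVec (y i) x0, Matrix.vecMulVec (y i) (y i)))} with hGset_def
  -- Gset is a cone
  have hcone : ∀ cc : ℝ, 0 ≤ cc → ∀ T ∈ Gset, cc • T ∈ Gset := by
    intro cc hcc T hT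
    obtain ⟨x0, hx0, y, hy, rfl⟩ := hT
    refine ⟨Real.sqrt cc • x0, fun a => mul_nonneg (Real.sqrt_nonneg _) (hx0 a),
      fun i => Real.sqrt cc • y i, fun i => hKi i _ (Real.sqrt_nonneg _) _ (hy i), ?_⟩
    have hcs : Real.sqrt cc * Real.sqrt cc = cc := Real.mul_self_sqrt hcc
    rw [Prod.ext_iff]
    constructor
    · ext a b
      simp only [Prod.smul_fst, Matrix.smul_apply, vecMulVec_apply, smul_eq_mul, Pi.smul_apply]
      linear_combination (x0 a * x0 b) * hcs.symm
    · funext i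
      rw [Prod.ext_iff]
      constructor
      · ext a b
        simp only [Prod.smul_snd, Pi.smul_apply, Prod.smul_fst, Matrix.smul_apply,
          vecMulVec_apply, smul_eq_mul]
        linear_combination (y i a * x0 b) * hcs.symm
      · ext a b
        simp only [Prod.smul_snd, Pi.smul_apply, Matrix.smul_apply,
          vecMulVec_apply, smul_eq_mul]
        linear_combination (y i a * y i b) * hcs.symm
  -- 0 is in Gset
  have h0G : (0 : Matrix (Fin n₁) (Fin n₁) ℝ ×
      (Fin S → Matrix (Fin n₂) (Fin n₁) ℝ × Matrix (Fin n₂) (Fin n₂) ℝ)) ∈ Gset := by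
    refine ⟨0, fun a => le_rfl, fun _ => 0, fun i => h0K i, ?_⟩
    rw [Prod.ext_iff]
    constructor
    · ext a b; simp [vecMulVec_apply]
    · funext i
      rw [Prod.ext_iff]
      constructor
      · ext a b; simp [vecMulVec_apply]
      · ext a b; simp [vecMulVec_apply]
  -- each generator is in Gset
  have hg : ∀ p : (∀ j, Fin (r j)) ⊕ (Σ j : Fin S, Fin (r j)),
      Sum.elim g1 g2 p ∈ Gset := by
    intro p
    rcases p with L | q
    · refine ⟨xv L, fun a => mul_nonneg (hsqnn L) (hsingle a), yv L, fun i => ?_, rfl⟩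
      have : yv L i = (sq L / t i (L i)) • w i (L i) := by
        funext b'; simp [hyv_def, smul_eq_mul]
      rw [this]
      exact hKi i _ (div_nonneg (hsqnn L) (ht0 i (L i))) _ (hwK i (L i))
    · refine ⟨0, fun a => le_rfl, yw q, fun jj => ?_, rfl⟩
      by_cases hcond : jj = q.1 ∧ t q.1 q.2 = 0
      · have : yw q jj = w q.1 q.2 := by funext b'; simp [hyw_def, hcond]
        rw [this, hcond.1]
        exact hwK _ _
      · have : yw q jj = 0 := by funext b'; simp [hyw_def, hcond]
        rw [this]
        exact h0K jj
  -- zero sums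
  have hE : (∑ _q : Σ j : Fin S, Fin (r j),
      vecMulVec (0 : Fin n₁ → ℝ) (0 : Fin n₁ → ℝ)) = 0 := by
    ext a b; simp [Matrix.sum_apply, vecMulVec_apply]
  have hD : ∀ i : Fin S, (∑ q : Σ j : Fin S, Fin (r j),
      vecMulVec (yw q i) (0 : Fin n₁ → ℝ)) = 0 := by
    intro i; ext a b; simp [Matrix.sum_apply, vecMulVec_apply]
  -- component sums
  have hA : (∑ L : ∀ j, Fin (r j), vecMulVec (xv L) (xv L))
      = x • vecMulVec (Pi.single k 1 : Fin n₁ → ℝ) (Pi.single k 1) := by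
    ext a b
    simp only [Matrix.sum_apply, vecMulVec_apply, Matrix.smul_apply, smul_eq_mul, hxv_def]
    calc ∑ L : ∀ j, Fin (r j), (sq L * (Pi.single k 1 : Fin n₁ → ℝ) a) * (sq L * (Pi.single k 1 : Fin n₁ → ℝ) b)
        = ∑ L : ∀ j, Fin (r j), m L * ((Pi.single k 1 : Fin n₁ → ℝ) a * (Pi.single k 1 : Fin n₁ → ℝ) b) :=
          Finset.sum_congr rfl fun L _ => by rw [← hss L]; ring
      _ = (∑ L : ∀ j, Fin (r j), m L) * ((Pi.single k 1 : Fin n₁ → ℝ) a * (Pi.single k 1 : Fin n₁ → ℝ) b) :=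
          (Finset.sum_mul _ _ _).symm
      _ = x * ((Pi.single k 1 : Fin n₁ → ℝ) a * (Pi.single k 1 : Fin n₁ → ℝ) b) := by rw [hsum1]
      _ = x * ((Pi.single k 1 : Fin n₁ → ℝ) a * (Pi.single k 1 : Fin n₁ → ℝ) b) := rfl
  have hB : ∀ i : Fin S, (∑ L : ∀ j, Fin (r j), vecMulVec (yv L i) (xv L))
      = vecMulVec (z i) (Pi.single k 1 : Fin n₁ → ℝ) := by
    intro i
    ext a b
    simp only [Matrix.sum_apply, vecMulVec_apply, hxv_def, hyv_def]
    calc ∑ L : ∀ j, Fin (r j),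
          (sq L / t i (L i) * w i (L i) a) * (sq L * (Pi.single k 1 : Fin n₁ → ℝ) b)
        = ∑ L : ∀ j, Fin (r j), (m L / t i (L i) * w i (L i) a) * (Pi.single k 1 : Fin n₁ → ℝ) b :=
          Finset.sum_congr rfl fun L _ => by rw [← hss L]; ring
      _ = (∑ L : ∀ j, Fin (r j), m L / t i (L i) * w i (L i) a) * (Pi.single k 1 : Fin n₁ → ℝ) b :=
          (Finset.sum_mul _ _ _).symm
      _ = z i a * (Pi.single k 1 : Fin n₁ → ℝ) b := by rw [hsumZ i a]
  have hC : ∀ i : Fin S, ((∑ L : ∀ j, Fin (r j), vecMulVec (yv L i) (yv L i))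
      + ∑ q : Σ j : Fin S, Fin (r j), vecMulVec (yw q i) (yw q i)) = Y i := by
    intro i
    ext a b
    simp only [Matrix.add_apply, Matrix.sum_apply, vecMulVec_apply, hyv_def, hyw_def]
    have e1 : ∑ L : ∀ j, Fin (r j),
        (sq L / t i (L i) * w i (L i) a) * (sq L / t i (L i) * w i (L i) b)
        = (∑ l, if t i l = 0 then 0 else w i l a * w i l b) * x ^ (S - 1) / c := by
      rw [← hsumY1 i a b]
      exact Finset.sum_congr rfl fun L _ => by rw [← hss L]; ring
    have e2 : ∑ q : Σ j : Fin S, Fin (r j),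
        (if i = q.1 ∧ t q.1 q.2 = 0 then w q.1 q.2 a else 0)
          * (if i = q.1 ∧ t q.1 q.2 = 0 then w q.1 q.2 b else 0)
        = ∑ l, if t i l = 0 then w i l a * w i l b else 0 := by
      rw [← Finset.univ_sigma_univ, Finset.sum_sigma]
      have e3 : ∀ j : Fin S, (∑ l : Fin (r j),
          (if i = j ∧ t j l = 0 then w j l a else 0) * (if i = j ∧ t j l = 0 then w j l b else 0))
          = if i = j then (∑ l : Fin (r j), if t j l = 0 then w j l a * w j l b else 0) else 0 := by
        intro j
        by_cases hij : i = j
        · subst hij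
          refine (Finset.sum_congr rfl fun l _ => ?_).trans (if_pos rfl).symm
          by_cases h0 : t i l = 0 <;> simp [h0]
        · simp [hij]
      rw [Finset.sum_congr rfl fun j _ => e3 j, Finset.sum_ite_eq]
      simp
    rw [e1, e2]
    rcases eq_or_ne x 0 with h0 | h0
    · have hA0 : (∑ l, if t i l = 0 then 0 else w i l a * w i l b) = 0 :=
        Finset.sum_eq_zero fun l _ => by rw [if_pos (htzero h0 i l)]
      have hB0 : (∑ l, if t i l = 0 then w i l a * w i l b else 0)
          = ∑ l, w i l a * w i l b :=
        Finset.sum_congr rfl fun l _ => by rw [if_pos (htzero h0 i l)]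
      rw [hA0, hB0, ← hYe i a b]
      simp
    · rw [hc_def, mul_div_cancel_right₀ _ (pow_ne_zero _ h0), ← Finset.sum_add_distrib,
        Finset.sum_congr rfl fun (l : Fin (r i)) _ =>
          (by by_cases h0l : t i l = 0 <;> simp [h0l] :
            (if t i l = 0 then 0 else w i l a * w i l b)
              + (if t i l = 0 then w i l a * w i l b else 0) = w i l a * w i l b),
        ← hYe i a b]
  -- the total sum equals the target
  have hTsum : (x • Matrix.vecMulVec (Pi.single k 1 : Fin n₁ → ℝ) (Pi.single k 1),
      fun i => (Matrix.vecMulVec (z i) (Pi.single k 1 : Fin n₁ → ℝ), Y i))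
      = ∑ p : (∀ j, Fin (r j)) ⊕ (Σ j : Fin S, Fin (r j)), Sum.elim g1 g2 p := by
    rw [Fintype.sum_sum_type]
    simp only [Sum.elim_inl, Sum.elim_inr, hg1_def, hg2_def]
    rw [Prod.ext_iff]
    constructor
    · simp only [Prod.fst_add, Prod.fst_sum]
      rw [hA, hE, add_zero]
    · funext i
      rw [Prod.ext_iff]
      constructor
      · simp only [Prod.snd_add, Prod.snd_sum, Pi.add_apply, Finset.sum_apply,
          Prod.fst_add, Prod.fst_sum]
        rw [hB i, hD i, add_zero]
      · simp only [Prod.snd_add, Prod.snd_sum, Pi.add_apply, Finset.sum_apply,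
          Prod.snd_add, Prod.snd_sum]
        exact (hC i).symm
  have hfinal : (x • Matrix.vecMulVec (Pi.single k 1 : Fin n₁ → ℝ) (Pi.single k 1),
      fun i => (Matrix.vecMulVec (z i) (Pi.single k 1 : Fin n₁ → ℝ), Y i))
      ∈ convexHull ℝ Gset := by
    rw [hTsum]
    exact aux_sum_mem_convexHull hcone h0G _ hg
  exact hfinal
end

section
/- Let n₁, n₂, S ≥ 1, let x ∈ ℝ^{n₁}, let X be a symmetric n₁×n₁ real matrix, and for each i ∈ {1,…,S} let y_i ∈ ℝ^{n₂}, Z_i ∈ ℝ^{n₂×n₁} and Y_i a symmetric n₂×n₂ real matrix. Suppose that for every i ∈ {1,…,S} the (1+n₁+n₂)×(1+n₁+n₂) block matrix [[1, xᵀ, y_iᵀ],[x, X, Z_iᵀ],[y_i, Z_i, Y_i]] is positive semidefinite. Then there exist real n₂×n₂ matrices Y_{ij} for i ≠ j with Y_{ji} = Y_{ij}ᵀ such that the (1+n₁+Sn₂)×(1+n₁+Sn₂) block matrix whose first block row is (1, xᵀ, y₁ᵀ, …, y_Sᵀ), whose second block row is (x, X, Z₁ᵀ, …, Z_Sᵀ),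 and whose block row for each i ∈ {1,…,S} is (y_i, Z_i, Y_{i1}, …, Y_{iS}) with Y_{ii} = Y_i, is positive semidefinite. -/
open Matrix

/-- The `(1+n₁+n₂) × (1+n₁+n₂)` block matrix `[[1, xᵀ, yᵀ], [x, X, Zᵀ], [y, Z, Y]]`. -/
def smallArrow {n₁ n₂ : ℕ} (x : Fin n₁ → ℝ) (X : Matrix (Fin n₁) (Fin n₁) ℝ)
    (y : Fin n₂ → ℝ) (Z : Matrix (Fin n₂) (Fin n₁) ℝ) (Y : Matrix (Fin n₂) (Fin n₂) ℝ) :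
    Matrix (Fin 1 ⊕ (Fin n₁ ⊕ Fin n₂)) (Fin 1 ⊕ (Fin n₁ ⊕ Fin n₂)) ℝ :=
  Matrix.fromBlocks (Matrix.of fun _ _ => 1)
    (Matrix.of fun _ j => Sum.elim x y j)
    (Matrix.of fun i _ => Sum.elim x y i)
    (Matrix.fromBlocks X Zᵀ Z Y)

/-- The `(1+n₁+S·n₂) × (1+n₁+S·n₂)` block matrix with first block row
`(1, xᵀ, y₁ᵀ, …, y_Sᵀ)`, second block row `(x, X, Z₁ᵀ, …, Z_Sᵀ)`, and block row
`(y_i, Z_i, Y_{i1}, …, Y_{iS})` for each `i`. -/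
def bigArrow {n₁ n₂ S : ℕ} (x : Fin n₁ → ℝ) (X : Matrix (Fin n₁) (Fin n₁) ℝ)
    (y : Fin S → Fin n₂ → ℝ) (Z : Fin S → Matrix (Fin n₂) (Fin n₁) ℝ)
    (Yb : Fin S → Fin S → Matrix (Fin n₂) (Fin n₂) ℝ) :
    Matrix (Fin 1 ⊕ (Fin n₁ ⊕ Fin S × Fin n₂)) (Fin 1 ⊕ (Fin n₁ ⊕ Fin S × Fin n₂)) ℝ :=
  Matrix.fromBlocks (Matrix.of fun _ _ => 1)
    (Matrix.of fun _ j => Sum.elim x (fun p => y p.1 p.2) j)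
    (Matrix.of fun i _ => Sum.elim x (fun p => y p.1 p.2) i)
    (Matrix.fromBlocks X (Matrix.of fun i p => Z p.1 p.2 i)
      (Matrix.of fun p j => Z p.1 p.2 j) (Matrix.of fun p q => Yb p.1 q.1 p.2 q.2))

noncomputable section
variable {m : Type*} [Fintype m] [DecidableEq m]

lemma ct_eq {α β : Type*} (M : Matrix α β ℝ) : Mᴴ = Mᵀ := by
  ext i j; simp [conjTranspose_apply]

lemma my_spec {A : Matrix m m ℝ} (hA : A.IsHermitian) :
    A = (hA.eigenvectorUnitary : Matrix m m ℝ) * diagonal hA.eigenvalues *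
      star (hA.eigenvectorUnitary : Matrix m m ℝ) := by
  have h := hA.spectral_theorem
  have h2 : (RCLike.ofReal ∘ hA.eigenvalues : m → ℝ) = hA.eigenvalues := by
    funext i; simp
  rwa [h2] at h

lemma pinv_exists (A : Matrix m m ℝ) (hA : A.IsHermitian) :
    ∃ P : Matrix m m ℝ, Pᵀ = P ∧ A * P * A = A := by
  obtain ⟨U, μ, hU, e⟩ : ∃ (U : Matrix m m ℝ) (μ : m → ℝ),
      star U * U = 1 ∧ A = U * diagonal μ * star U :=
    ⟨_, _, Unitary.star_mul_self_of_mem hA.eigenvectorUnitary.2, my_spec hA⟩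
  have hsu : star U = Uᵀ := by rw [Matrix.star_eq_conjTranspose, ct_eq]
  have key : ∀ f g : m → ℝ, (U * diagonal f * star U) * (U * diagonal g * star U)
      = U * diagonal (fun i => f i * g i) * star U := by
    intro f g
    simp only [mul_assoc]
    rw [← mul_assoc (star U), hU, one_mul, ← mul_assoc (diagonal f), diagonal_mul_diagonal]
  refine ⟨U * diagonal (fun i => (μ i)⁻¹) * star U, ?_, ?_⟩
  · rw [hsu]
    simp [transpose_mul, diagonal_transpose, mul_assoc]
  · rw [e, key, key]
    congr 2
    funext i
    by_cases h : μ i = 0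
    · simp [h]
    · field_simp

variable {k : Type*} [Fintype k] [DecidableEq k]

lemma arrow_key {S : ℕ} (A : Matrix m m ℝ) (hA : A.PosSemidef)
    (B : Fin S → Matrix k m ℝ) (D : Fin S → Matrix k k ℝ)
    (h : ∀ i, (fromBlocks A (B i)ᵀ (B i) (D i)).PosSemidef) :
    ∃ E : Fin S → Fin S → Matrix k k ℝ, (∀ i, E i i = D i) ∧ (∀ i j, E j i = (E i j)ᵀ) ∧
      (fromBlocks A
        (of fun a (p : Fin S × k) => B p.1 p.2 a)
        (of fun (p : Fin S × k) a => B p.1 p.2 a)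
        (of fun p q => E p.1 q.1 p.2 q.2)).PosSemidef := by
  obtain ⟨P, hPt, hAPA⟩ := pinv_exists A hA.1
  have hAt : Aᵀ = A := by rw [← ct_eq]; exact hA.1
  have hDsym : ∀ i, (D i)ᵀ = D i := by
    intro i
    ext b c
    have := congrFun (congrFun (h i).1 (Sum.inr b)) (Sum.inr c)
    simpa [conjTranspose_apply, fromBlocks] using this
  -- range condition
  have hBPA : ∀ i, B i * (P * A) = B i := by
    intro i
    obtain ⟨V, hV⟩ : ∃ V : Matrix (m ⊕ k) (m ⊕ k) ℝ, fromBlocks A (B i)ᵀ (B i) (D i) = Vᴴ * V := by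
      open scoped MatrixOrder in exact CStarAlgebra.nonneg_iff_eq_star_mul_self.mp (h i).nonneg
    set F : Matrix (m ⊕ k) m ℝ := V.submatrix id Sum.inl with hFdef
    set Gm : Matrix (m ⊕ k) k ℝ := V.submatrix id Sum.inr with hGmdef
    have hFF : Fᴴ * F = A := by
      ext a a'
      have e := congrFun (congrFun hV (Sum.inl a)) (Sum.inl a')
      simp only [fromBlocks, of_apply, Sum.elim_inl] at e
      simpa [mul_apply, conjTranspose_apply, hFdef] using e.symm
    have hGF : Gmᴴ * F = B i := by
      ext b a'
      have e := congrFun (congrFun hV (Sum.inr b)) (Sum.inl a')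
      simp only [fromBlocks, of_apply, Sum.elim_inl, Sum.elim_inr] at e
      simpa [mul_apply, conjTranspose_apply, hFdef, hGmdef] using e.symm
    have hz : F * (1 - P * A) = 0 := by
      rw [← conjTranspose_mul_self_eq_zero (A := F * (1 - P * A))]
      calc (F * (1 - P * A))ᴴ * (F * (1 - P * A))
          = (1 - P * A)ᴴ * ((Fᴴ * F) * (1 - P * A)) := by
            rw [conjTranspose_mul, Matrix.mul_assoc, ← Matrix.mul_assoc Fᴴ]
        _ = 0 := by
            rw [hFF, Matrix.mul_sub, Matrix.mul_one, ← Matrix.mul_assoc, hAPA, sub_self, Matrix.mul_zero]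
    have hF1 : F * (P * A) = F := by
      rw [Matrix.mul_sub, Matrix.mul_one, sub_eq_zero] at hz
      exact hz.symm
    calc B i * (P * A) = Gmᴴ * (F * (P * A)) := by rw [← hGF, Matrix.mul_assoc]
      _ = Gmᴴ * F := by rw [hF1]
      _ = B i := hGF
  have hAPB : ∀ i, A * (P * (B i)ᵀ) = (B i)ᵀ := by
    intro i
    conv_rhs => rw [← hBPA i]
    rw [transpose_mul, transpose_mul, hPt, hAt, Matrix.mul_assoc]
  -- Schur complements are PSD
  set Gs : Fin S → Matrix k k ℝ := fun i => D i - B i * (P * (B i)ᵀ) with hGsdef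
  have hGsym : ∀ i, (Gs i)ᵀ = Gs i := by
    intro i
    simp only [hGsdef]
    rw [transpose_sub, hDsym i, transpose_mul, transpose_mul, hPt, transpose_transpose,
      Matrix.mul_assoc]
  have hGpsd : ∀ i, (Gs i).PosSemidef := by
    intro i
    have hcon := (h i).conjTranspose_mul_mul_same (fromRows (-(P * (B i)ᵀ)) (1 : Matrix k k ℝ))
    have e1 : fromBlocks A (B i)ᵀ (B i) (D i) * fromRows (-(P * (B i)ᵀ)) (1 : Matrix k k ℝ)
        = fromRows 0 (Gs i) := by
      rw [fromBlocks_mul_fromRows, Matrix.mul_neg, hAPB i, Matrix.mul_one, neg_add_cancel,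
        Matrix.mul_neg, Matrix.mul_one, neg_add_eq_sub]
    have e2 : (fromRows (-(P * (B i)ᵀ)) (1 : Matrix k k ℝ))ᴴ
          * (fromBlocks A (B i)ᵀ (B i) (D i) * fromRows (-(P * (B i)ᵀ)) (1 : Matrix k k ℝ)) = Gs i := by
      rw [e1, ct_eq, transpose_fromRows, fromCols_mul_fromRows]
      simp
    rw [Matrix.mul_assoc, e2] at hcon
    exact hcon
  -- assemble
  set Bhat : Matrix (Fin S × k) m ℝ := of (fun p a => B p.1 p.2 a) with hBhatdef
  set K : Matrix m (m ⊕ Fin S × k) ℝ := fromCols (1 : Matrix m m ℝ) (P * Bhatᵀ) with hKdef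
  have hBhatPA : Bhat * (P * A) = Bhat := by
    ext p a
    have e := congrFun (congrFun (hBPA p.1) p.2) a
    simp only [mul_apply] at e ⊢
    simpa [hBhatdef] using e
  have hAPBhat : A * (P * Bhatᵀ) = Bhatᵀ := by
    ext a p
    have e := congrFun (congrFun (hAPB p.1) a) p.2
    simp only [mul_apply, transpose_apply] at e ⊢
    simpa [hBhatdef] using e
  have hN₁ : Kᴴ * A * K = fromBlocks A Bhatᵀ Bhat (Bhat * (P * Bhatᵀ)) := by
    rw [hKdef, ct_eq, transpose_fromCols, transpose_one, fromRows_mul,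
      fromRows_mul_fromCols, fromBlocks_inj]
    refine ⟨by rw [Matrix.one_mul, Matrix.mul_one], by rw [Matrix.one_mul]; exact hAPBhat, ?_, ?_⟩
    · rw [transpose_mul, hPt, transpose_transpose, Matrix.mul_one, Matrix.mul_assoc, hBhatPA]
    · rw [transpose_mul, hPt, transpose_transpose, Matrix.mul_assoc Bhat P A, hBhatPA]
  set Q : Matrix (m ⊕ Fin S × k) (m ⊕ Fin S × k) ℝ :=
    fromBlocks 0 0 0 (of fun p q => if p.1 = q.1 then Gs p.1 p.2 q.2 else 0) with hQdef
  have hQpsd : Q.PosSemidef := by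
    refine posSemidef_iff_dotProduct_mulVec.mpr ⟨?_, ?_⟩
    · rw [IsHermitian, ct_eq]
      ext r s
      rcases r with a | ⟨i, b⟩ <;> rcases s with a' | ⟨j, c⟩ <;>
        simp [hQdef, fromBlocks, transpose_apply]
      by_cases hij : i = j
      · subst hij
        simp only [if_pos rfl]
        exact congrFun (congrFun (hGsym i) b) c
      · simp [hij, Ne.symm hij]
    · intro v
      have key : dotProduct (star v) (Q *ᵥ v)
          = ∑ i : Fin S, (fun b => v (Sum.inr (i, b))) ⬝ᵥ (Gs i *ᵥ fun b => v (Sum.inr (i, b))) := by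
        simp only [star_trivial, dotProduct, mulVec, Fintype.sum_sum_type, Fintype.sum_prod_type,
          hQdef, fromBlocks, of_apply, Sum.elim_inl, Sum.elim_inr, Matrix.zero_apply]
        simp [Finset.mul_sum, Finset.sum_ite_eq, Finset.sum_comm (γ := Fin S)]
      rw [key]
      exact Finset.sum_nonneg fun i _ => by simpa using (hGpsd i).dotProduct_mulVec_nonneg (fun b => v (Sum.inr (i, b)))
  refine ⟨fun i j => if i = j then D i else B i * (P * (B j)ᵀ), fun i => by simp, ?_, ?_⟩
  · intro i j
    by_cases hij : i = j
    · subst hij; simp [hDsym i]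
    · simp only [hij, Ne.symm hij, if_neg, if_false]
      rw [transpose_mul, transpose_mul, hPt, transpose_transpose, Matrix.mul_assoc]
  · have hEq : fromBlocks A
        (of fun a (p : Fin S × k) => B p.1 p.2 a)
        (of fun (p : Fin S × k) a => B p.1 p.2 a)
        (of fun p q => (if p.1 = q.1 then D p.1 else B p.1 * (P * (B q.1)ᵀ)) p.2 q.2)
        = Kᴴ * A * K + Q := by
      rw [hN₁, hQdef, fromBlocks_add]
      rw [fromBlocks_inj]
      refine ⟨by simp, ?_, ?_, ?_⟩
      · ext a p; simp [hBhatdef]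
      · ext p a; simp [hBhatdef]
      · ext p q
        have ebp : (Bhat * (P * Bhatᵀ)) p q = (B p.1 * (P * (B q.1)ᵀ)) p.2 q.2 := by
          simp [mul_apply, hBhatdef, Finset.mul_sum]
        simp only [Matrix.add_apply, of_apply, ebp]
        by_cases hpq : p.1 = q.1
        · rw [if_pos hpq, if_pos hpq, hpq]
          simp [hGsdef, hpq]
        · simp [hpq]
    rw [hEq]
    exact (hA.conjTranspose_mul_mul_same K).add hQpsd

end

theorem stmt_10 (n₁ n₂ S : ℕ) (h₁ : 1 ≤ n₁) (h₂ : 1 ≤ n₂) (hS : 1 ≤ S)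
    (x : Fin n₁ → ℝ) (X : Matrix (Fin n₁) (Fin n₁) ℝ)
    (y : Fin S → Fin n₂ → ℝ) (Z : Fin S → Matrix (Fin n₂) (Fin n₁) ℝ)
    (Y : Fin S → Matrix (Fin n₂) (Fin n₂) ℝ)
    (h : ∀ i, (smallArrow x X (y i) (Z i) (Y i)).PosSemidef) :
    ∃ Yb : Fin S → Fin S → Matrix (Fin n₂) (Fin n₂) ℝ,
      (∀ i, Yb i i = Y i) ∧ (∀ i j, Yb j i = (Yb i j)ᵀ) ∧
      (bigArrow x X y Z Yb).PosSemidef := by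
  classical
  set A : Matrix (Fin 1 ⊕ Fin n₁) (Fin 1 ⊕ Fin n₁) ℝ :=
    fromBlocks (of fun _ _ => 1) (of fun _ j => x j) (of fun i _ => x i) X with hAdef
  set B : Fin S → Matrix (Fin n₂) (Fin 1 ⊕ Fin n₁) ℝ :=
    fun i => of fun b a => Sum.elim (fun _ => y i b) (fun a' => Z i b a') a with hBdef
  have hsmall : ∀ i, fromBlocks A (B i)ᵀ (B i) (Y i)
      = (smallArrow x X (y i) (Z i) (Y i)).submatrix
          (Equiv.sumAssoc (Fin 1) (Fin n₁) (Fin n₂))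
          (Equiv.sumAssoc (Fin 1) (Fin n₁) (Fin n₂)) := by
    intro i
    ext r s
    rcases r with (a | a) | b <;> rcases s with (a' | a') | b' <;>
      simp [smallArrow, fromBlocks, Equiv.sumAssoc, hAdef, hBdef]
  have h' : ∀ i, (fromBlocks A (B i)ᵀ (B i) (Y i)).PosSemidef := fun i =>
    (hsmall i) ▸ (h i).submatrix _
  have hA : A.PosSemidef := by
    have hsub := (h' ⟨0, hS⟩).submatrix (Sum.inl : Fin 1 ⊕ Fin n₁ → (Fin 1 ⊕ Fin n₁) ⊕ Fin n₂)
    have e : (fromBlocks A (B ⟨0,hS⟩)ᵀ (B ⟨0,hS⟩) (Y ⟨0,hS⟩)).submatrix Sum.inl Sum.inl = A := by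
      ext a a'
      simp [fromBlocks]
    rwa [e] at hsub
  obtain ⟨E, hE1, hE2, hN⟩ := arrow_key A hA B Y h'
  refine ⟨E, hE1, hE2, ?_⟩
  have hbig : bigArrow x X y Z E
      = (fromBlocks A
          (of fun a (p : Fin S × Fin n₂) => B p.1 p.2 a)
          (of fun (p : Fin S × Fin n₂) a => B p.1 p.2 a)
          (of fun p q => E p.1 q.1 p.2 q.2)).submatrix
            ((Equiv.sumAssoc (Fin 1) (Fin n₁) (Fin S × Fin n₂)).symm)
            ((Equiv.sumAssoc (Fin 1) (Fin n₁) (Fin S × Fin n₂)).symm) := by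
    ext r s
    rcases r with a | (a | p) <;> rcases s with a' | (a' | q) <;>
      simp [bigArrow, fromBlocks, Equiv.sumAssoc, hAdef, hBdef]
  rw [hbig]
  exact hN.submatrix _
end

section
/- Let n₁, n₂, S be natural numbers with S > 1. Define the simple graph G on the vertex set V consisting of a set L of n₁ vertices together with S disjoint groups g₁,…,g_S of n₂ vertices each, where two distinct vertices u, v are adjacent if and only if at least one of them lies in L, or u and v lie in the same group g_i. Then G is chordal: every cycle in G of length at least 4 has a chord, i.e., for every closed walk in G that is a cycle of length ≥ 4 there exist two vertices visited by the cycle that are adjacent in G but whose connecting edge is not an edge of the cycle. -/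
/-- The specification graph of an arrowhead partial matrix: vertices are `n₁`
"leading" vertices (`Sum.inl`) together with `S` groups of `n₂` vertices each
(`Sum.inr (i, a)` lies in group `i`); two distinct vertices are adjacent iff at
least one of them is a leading vertex, or they lie in the same group. -/
def arrowGraph (n₁ n₂ S : ℕ) : SimpleGraph (Fin n₁ ⊕ Fin S × Fin n₂) where
  Adj u v := u ≠ v ∧ ((∃ a, u = Sum.inl a) ∨ (∃ a, v = Sum.inl a) ∨
    (∃ i a b, u = Sum.inr (i, a) ∧ v = Sum.inr (i, b)))
  symm := by
    constructor
    rintro u v ⟨h1, h2⟩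
    refine ⟨h1.symm, ?_⟩
    rcases h2 with h | h | ⟨i, a, b, ha, hb⟩
    · exact Or.inr (Or.inl h)
    · exact Or.inl h
    · exact Or.inr (Or.inr ⟨i, b, a, hb, ha⟩)
  loopless := by constructor; rintro u ⟨h1, _⟩; exact h1 rfl

theorem stmt_11 (n₁ n₂ S : ℕ) (hS : 1 < S)
    (v : Fin n₁ ⊕ Fin S × Fin n₂) (c : (arrowGraph n₁ n₂ S).Walk v v)
    (hc : c.IsCycle) (hlen : 4 ≤ c.length) :
    ∃ a b, a ∈ c.support ∧ b ∈ c.support ∧ (arrowGraph n₁ n₂ S).Adj a b ∧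
      s(a, b) ∉ c.edges := by
  rcases c with _ | ⟨h₀, c⟩
  · simp at hlen
  rcases c with _ | ⟨h₁, c⟩
  · simp at hlen
  rcases c with _ | ⟨h₂, p⟩
  · simp at hlen
  rename_i v1 v2 v3
  have hnd := hc.2
  simp only [SimpleGraph.Walk.support_cons, List.tail_cons] at hnd
  rw [List.nodup_cons, List.nodup_cons] at hnd
  obtain ⟨h1, h2, hpn⟩ := hnd
  have hlenp : 1 ≤ p.length := by
    simp only [SimpleGraph.Walk.length_cons] at hlen; omega
  have hv3p : v3 ∈ p.support := p.start_mem_support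
  have hvp : v ∈ p.support := p.end_mem_support
  have h1v2 : v1 ≠ v2 := fun h => h1 (h ▸ List.mem_cons_self)
  have h1p : ∀ x ∈ p.support, v1 ≠ x := fun x hx h =>
    h1 (h ▸ List.mem_cons_of_mem _ hx)
  have h2p : ∀ x ∈ p.support, v2 ≠ x := fun x hx h => h2 (h ▸ hx)
  have hv3v : v3 ≠ v := by
    rintro rfl
    have := SimpleGraph.Walk.isPath_iff_eq_nil.mp (SimpleGraph.Walk.IsPath.mk' hpn)
    subst this
    simp at hlenp
  have hvv1 : v ≠ v1 := fun h => h1p v hvp h.symm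
  have hvv2 : v ≠ v2 := fun h => h2p v hvp h.symm
  have h1v3 : v1 ≠ v3 := h1p v3 hv3p
  have h2v3 : v2 ≠ v3 := h2p v3 hv3p
  by_cases hA : (arrowGraph n₁ n₂ S).Adj v v2
  · refine ⟨v, v2, ?_, ?_, hA, ?_⟩
    · simp [SimpleGraph.Walk.support_cons]
    · simp [SimpleGraph.Walk.support_cons]
    · intro hmem
      simp only [SimpleGraph.Walk.edges_cons, List.mem_cons, Sym2.eq_iff] at hmem
      rcases hmem with (⟨h, h'⟩ | ⟨h, h'⟩) | (⟨h, h'⟩ | ⟨h, h'⟩) | (⟨h, h'⟩ | ⟨h, h'⟩) | hmem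
      · simp_all
      · simp_all
      · simp_all
      · simp_all
      · simp_all
      · simp_all
      · exact h2p v2 (SimpleGraph.Walk.snd_mem_support_of_mem_edges p hmem) rfl
  · -- v and v2 are in different groups
    have hne : v ≠ v2 := hvv2
    obtain ⟨i, a⟩ | ⟨i, a⟩ := v
    · exact absurd ⟨hne, Or.inl ⟨_, rfl⟩⟩ hA
    obtain ⟨j, b⟩ | ⟨j, b⟩ := v2
    · exact absurd ⟨hne, Or.inr (Or.inl ⟨_, rfl⟩)⟩ hA
    have hij : i ≠ j := by
      rintro rfl
      exact hA ⟨hne, Or.inr (Or.inr ⟨i, a, b, rfl, rfl⟩)⟩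
    -- v1 must be a leading vertex
    obtain ⟨x, hx⟩ : ∃ x, v1 = Sum.inl x := by
      rcases v1 with x | ⟨k, y⟩
      · exact ⟨x, rfl⟩
      exfalso
      rcases h₀.2 with ⟨_, h⟩ | ⟨_, h⟩ | ⟨l, y', z', hy, hz⟩
      · exact absurd h (by simp)
      · exact absurd h (by simp)
      · rcases h₁.2 with ⟨_, h⟩ | ⟨_, h⟩ | ⟨l', y'', z'', hy', hz'⟩
        · exact absurd h (by simp)
        · exact absurd h (by simp)
        · simp only [Sum.inr.injEq, Prod.mk.injEq] at hy hz hy' hz'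
          exact hij (hy.1.trans (hz.1.symm.trans (hy'.1.trans hz'.1.symm)))
    refine ⟨v1, v3, ?_, ?_, ⟨h1v3, Or.inl ⟨x, hx⟩⟩, ?_⟩
    · simp [SimpleGraph.Walk.support_cons]
    · simp [SimpleGraph.Walk.support_cons, hv3p]
    · intro hmem
      simp only [SimpleGraph.Walk.edges_cons, List.mem_cons, Sym2.eq_iff] at hmem
      rcases hmem with (⟨h, h'⟩ | ⟨h, h'⟩) | (⟨h, h'⟩ | ⟨h, h'⟩) | (⟨h, h'⟩ | ⟨h, h'⟩) | hmem
      · simp_all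
      · simp_all
      · simp_all
      · simp_all
      · simp_all
      · simp_all
      · exact h1p v1 (SimpleGraph.Walk.fst_mem_support_of_mem_edges p hmem) rfl
end

section
/- Let S, n₁, n₂, K ≥ 1 and m₁,…,m_S ≥ 1. Let K₀ ⊆ ℝ^{n₁} and K_i ⊆ ℝ^{n₂} (i ∈ {1,…,S}) be closed convex cones, let F_i ∈ ℝ^{m_i×n₁}, G_i ∈ ℝ^{m_i×n₂}, r_i ∈ ℝ^{m_i}, and for j ∈ {1,…,K} let Q_j(x, y₁,…,y_S) = xᵀA^j x + (a^j)ᵀx + Σ_{i=1}^S ( xᵀ B_i^j y_i + y_iᵀ C_i^j y_i + (c_i^j)ᵀ y_i ) + d^j be quadratic functions (A^j, C_i^j symmetric; no bilinear terms between distinct y_i and y_j). Define 𝔽_i = {(x,y) ∈ K₀ × K_i : F_i x + G_i y = r_i} and assume each 𝔽_i is nonempty and bounded, and that whenever (x, y_i) ∈ 𝔽_i for all i ∈ {1,…,S} one has Q_j(x, y₁,…,y_S) ≥ 0 for all j ∈ {1,…,K}. Then the convex hull of the lifted feasible set L = {(x, x xᵀ, (y_i, y_i xᵀ, y_i y_iᵀ)_{i=1}^S)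 : (x, y_i) ∈ 𝔽_i for all i, and Q_j(x, y₁,…,y_S) = 0 for all j} equals the set of all tuples (x, X, (y_i, Z_i, Y_i)_{i=1}^S), with x ∈ ℝ^{n₁}, X symmetric n₁×n₁, y_i ∈ ℝ^{n₂}, Z_i ∈ ℝ^{n₂×n₁}, Y_i symmetric n₂×n₂, satisfying: (1) F_i x + G_i y_i = r_i for all i; (2) for all i, the vector of diagonal entries of (F_i G_i) [[X, Z_iᵀ],[Z_i, Y_i]] (F_i G_i)ᵀ equals the entrywise square r_i ∘ r_i; (3) for all j, A^j • X + (a^j)ᵀ x + Σ_{i=1}^S ( (B_i^j)ᵀ • Z_i + C_i^j • Y_i + (c_i^j)ᵀ y_i ) + d^j = 0, where M • N = trace(Mᵀ N); and (4) the connected component ( [[1, xᵀ],[x, X]], ( (y_i Z_i), Y_i )_{i=1}^S ), where (y_i Z_i) denotes the n₂×(1+n₁) matrix with first column y_i followed by the columns of Z_i, belongs to CMP(ℝ₊ × K₀, K₁,…,K_S). -/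
open Matrix

/-- The Frobenius inner product `M • N = trace (Mᵀ N)` of two matrices. -/
def frob {m n : Type*} [Fintype m] [Fintype n] (A B : Matrix m n ℝ) : ℝ :=
  Matrix.trace (Aᵀ * B)

set_option linter.unusedSectionVars false
set_option maxHeartbeats 1000000



section Aux
variable {ι m n p q : Type*} [Fintype m] [Fintype n] [Fintype p] [Fintype q]

lemma frob_vecMulVec (A : Matrix m n ℝ) (u : m → ℝ) (v : n → ℝ) :
    frob A (vecMulVec u v) = u ⬝ᵥ A *ᵥ v := by
  simp only [frob, trace, diag, mul_apply, vecMulVec_apply, transpose_apply,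
    dotProduct, mulVec]
  rw [Finset.sum_comm]
  exact Finset.sum_congr rfl fun j _ => by rw [Finset.mul_sum]; exact Finset.sum_congr rfl fun i _ => by ring

lemma frob_sum_smul (A : Matrix m n ℝ) (s : Finset ι) (w : ι → ℝ) (M : ι → Matrix m n ℝ) :
    frob A (∑ k ∈ s, w k • M k) = ∑ k ∈ s, w k * frob A (M k) := by
  simp [frob, Matrix.mul_sum, Matrix.mul_smul, trace_smul, smul_eq_mul]

lemma mul_vecMulVec_mul (M : Matrix m n ℝ) (N : Matrix p q ℝ) (u : n → ℝ) (v : q → ℝ) :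
    M * vecMulVec u v * Nᵀ = vecMulVec (M *ᵥ u) (N *ᵥ v) := by
  ext a b
  simp only [mul_apply, vecMulVec_apply, transpose_apply, mulVec, dotProduct]
  rw [Finset.mul_sum]
  refine Finset.sum_congr rfl fun j _ => ?_
  rw [Finset.sum_mul, Finset.sum_mul]
  exact Finset.sum_congr rfl fun i _ => by ring

lemma mulVec_finsum (M : Matrix m n ℝ) (s : Finset ι) (f : ι → n → ℝ) :
    M *ᵥ (∑ k ∈ s, f k) = ∑ k ∈ s, M *ᵥ f k := by
  exact Matrix.mulVec_sum M s f

lemma vecMulVec_isSymm (u : m → ℝ) : (vecMulVec u u).IsSymm := by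
  ext i j; simp [vecMulVec_apply, transpose_apply, mul_comm]

lemma cone_add {d : Type*} {K : Set (d → ℝ)} (hcone : ∀ c : ℝ, 0 ≤ c → ∀ x ∈ K, c • x ∈ K)
    (hconv : Convex ℝ K) {x y : d → ℝ} (hx : x ∈ K) (hy : y ∈ K) : x + y ∈ K := by
  have h := hconv hx hy (by norm_num : (0:ℝ) ≤ 1/2) (by norm_num : (0:ℝ) ≤ 1/2) (by norm_num)
  have h2 := hcone 2 (by norm_num) _ h
  convert h2 using 1
  module

lemma ray_zero {E : Type*} [NormedAddCommGroup E] [NormedSpace ℝ E] {s : Set E}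
    (hb : Bornology.IsBounded s) {p v : E} (h : ∀ c : ℝ, 0 ≤ c → p + c • v ∈ s) : v = 0 := by
  by_contra hv
  obtain ⟨C, hC⟩ := isBounded_iff_forall_norm_le.1 hb
  have hvn : 0 < ‖v‖ := norm_pos_iff.2 hv
  obtain ⟨nn, hn⟩ := exists_nat_gt ((C + ‖p‖) / ‖v‖)
  have hmem := h nn (Nat.cast_nonneg nn)
  have h1 : ‖(nn:ℝ) • v‖ - ‖p‖ ≤ ‖p + (nn:ℝ) • v‖ := by
    have := norm_add_le (p + (nn:ℝ) • v) (-p)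
    simp only [add_neg_cancel_comm, norm_neg] at this
    linarith
  have h2 : ‖(nn:ℝ) • v‖ = (nn:ℝ) * ‖v‖ := by
    rw [norm_smul, Real.norm_natCast]
  have h3 : (C + ‖p‖) < (nn:ℝ) * ‖v‖ := by
    rw [div_lt_iff₀ hvn] at hn; linarith
  have := hC _ hmem
  rw [h2] at h1
  linarith

lemma weighted_cs {ι : Type*} (s : Finset ι) (w α β : ι → ℝ) (hw : ∀ k ∈ s, 0 ≤ w k) (c : ℝ)
    (h1 : ∑ k ∈ s, w k * (α k * α k) = 1)
    (h2 : ∑ k ∈ s, w k * (α k * β k) = c)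
    (h3 : ∑ k ∈ s, w k * (β k * β k) = c * c) :
    ∀ k ∈ s, w k ≠ 0 → β k = c * α k := by
  have h0 : ∑ k ∈ s, w k * (β k - c * α k)^2 = 0 := by
    have : ∀ k ∈ s, w k * (β k - c * α k)^2
        = w k * (β k * β k) - (2*c) * (w k * (α k * β k)) + (c*c) * (w k * (α k * α k)) := by
      intro k _; ring
    rw [Finset.sum_congr rfl this, Finset.sum_add_distrib, Finset.sum_sub_distrib,
      ← Finset.mul_sum, ← Finset.mul_sum, h1, h2, h3]
    ring
  have hnn : ∀ k ∈ s, 0 ≤ w k * (β k - c * α k)^2 :=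
    fun k hk => mul_nonneg (hw k hk) (sq_nonneg _)
  intro k hk hwk
  have := (Finset.sum_eq_zero_iff_of_nonneg hnn).1 h0 k hk
  have hsq : (β k - c * α k)^2 = 0 := by
    rcases mul_eq_zero.1 this with h | h
    · exact absurd h hwk
    · exact h
  have := pow_eq_zero_iff (n := 2) (by norm_num) |>.1 hsq
  linarith [this]

end Aux

lemma dot_finsum {ι n : Type*} [Fintype n] (v : n → ℝ) (s : Finset ι) (f : ι → n → ℝ) :
    v ⬝ᵥ (∑ k ∈ s, f k) = ∑ k ∈ s, v ⬝ᵥ f k := by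
  simp only [dotProduct, Finset.sum_apply, Finset.mul_sum]
  rw [Finset.sum_comm]

lemma vecMulVec_smul_smul {m n : Type*} (c e : ℝ) (u : m → ℝ) (v : n → ℝ) :
    Matrix.vecMulVec (c • u) (e • v) = (c * e) • Matrix.vecMulVec u v := by
  ext i j
  simp [Matrix.vecMulVec_apply, Matrix.smul_apply]
  ring

lemma zero_vecMulVec {m n : Type*} (v : n → ℝ) : Matrix.vecMulVec (0 : m → ℝ) v = 0 := by
  ext i j; simp [Matrix.vecMulVec_apply]

lemma vecMulVec_zero' {m n : Type*} (u : m → ℝ) : Matrix.vecMulVec u (0 : n → ℝ) = 0 := by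
  ext i j; simp [Matrix.vecMulVec_apply]

theorem stmt_12 (S n₁ n₂ K : ℕ) (hS : 1 ≤ S) (h₁ : 1 ≤ n₁) (h₂ : 1 ≤ n₂) (hK : 1 ≤ K)
    (m : Fin S → ℕ) (hm : ∀ i, 1 ≤ m i)
    (K₀ : Set (Fin n₁ → ℝ)) (hK₀c : IsClosed K₀) (hK₀conv : Convex ℝ K₀)
    (hK₀cone : IsCone K₀)
    (Ki : Fin S → Set (Fin n₂ → ℝ)) (hKic : ∀ i, IsClosed (Ki i))
    (hKiconv : ∀ i, Convex ℝ (Ki i)) (hKicone : ∀ i, IsCone (Ki i))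
    (F : ∀ i : Fin S, Matrix (Fin (m i)) (Fin n₁) ℝ)
    (G : ∀ i : Fin S, Matrix (Fin (m i)) (Fin n₂) ℝ)
    (r : ∀ i : Fin S, Fin (m i) → ℝ)
    (A : Fin K → Matrix (Fin n₁) (Fin n₁) ℝ) (hA : ∀ j, (A j).IsSymm)
    (a : Fin K → Fin n₁ → ℝ)
    (B : Fin K → Fin S → Matrix (Fin n₁) (Fin n₂) ℝ)
    (C : Fin K → Fin S → Matrix (Fin n₂) (Fin n₂) ℝ) (hC : ∀ j i, (C j i).IsSymm)
    (c : Fin K → Fin S → Fin n₂ → ℝ) (d : Fin K → ℝ)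
    (Q : Fin K → (Fin n₁ → ℝ) → (Fin S → Fin n₂ → ℝ) → ℝ)
    (hQ : ∀ j x y, Q j x y = x ⬝ᵥ (A j).mulVec x + a j ⬝ᵥ x +
      (∑ i, (x ⬝ᵥ (B j i).mulVec (y i) + y i ⬝ᵥ (C j i).mulVec (y i) + c j i ⬝ᵥ y i)) + d j)
    (Feas : ∀ _ : Fin S, Set ((Fin n₁ → ℝ) × (Fin n₂ → ℝ)))
    (hFeas : ∀ i, Feas i =
      {p | p.1 ∈ K₀ ∧ p.2 ∈ Ki i ∧ (F i).mulVec p.1 + (G i).mulVec p.2 = r i})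
    (hFne : ∀ i, (Feas i).Nonempty) (hFbdd : ∀ i, Bornology.IsBounded (Feas i))
    (hQnonneg : ∀ (x : Fin n₁ → ℝ) (y : Fin S → Fin n₂ → ℝ),
      (∀ i, (x, y i) ∈ Feas i) → ∀ j, 0 ≤ Q j x y) :
    convexHull ℝ {t : (Fin n₁ → ℝ) × Matrix (Fin n₁) (Fin n₁) ℝ ×
        (Fin S → (Fin n₂ → ℝ) × Matrix (Fin n₂) (Fin n₁) ℝ × Matrix (Fin n₂) (Fin n₂) ℝ) |
      ∃ (x : Fin n₁ → ℝ) (y : Fin S → Fin n₂ → ℝ),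
        (∀ i, (x, y i) ∈ Feas i) ∧ (∀ j, Q j x y = 0) ∧
        t = (x, Matrix.vecMulVec x x,
          fun i => (y i, Matrix.vecMulVec (y i) x, Matrix.vecMulVec (y i) (y i)))} =
    {t : (Fin n₁ → ℝ) × Matrix (Fin n₁) (Fin n₁) ℝ ×
        (Fin S → (Fin n₂ → ℝ) × Matrix (Fin n₂) (Fin n₁) ℝ × Matrix (Fin n₂) (Fin n₂) ℝ) |
      t.2.1.IsSymm ∧ (∀ i, ((t.2.2 i).2.2).IsSymm) ∧
      (∀ i, (F i).mulVec t.1 + (G i).mulVec ((t.2.2 i).1) = r i) ∧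
      (∀ i, ∀ l, (Matrix.fromCols (F i) (G i) *
          Matrix.fromBlocks t.2.1 ((t.2.2 i).2.1)ᵀ ((t.2.2 i).2.1) ((t.2.2 i).2.2) *
          (Matrix.fromCols (F i) (G i))ᵀ) l l = r i l * r i l) ∧
      (∀ j, frob (A j) t.2.1 + a j ⬝ᵥ t.1 +
        (∑ i, (frob ((B j i)ᵀ) ((t.2.2 i).2.1) + frob (C j i) ((t.2.2 i).2.2) +
          c j i ⬝ᵥ (t.2.2 i).1)) + d j = 0) ∧
      ((Matrix.fromBlocks (Matrix.of fun (_ _ : Fin 1) => (1 : ℝ))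
          (Matrix.of fun (_ : Fin 1) j => t.1 j)
          (Matrix.of fun i (_ : Fin 1) => t.1 i) t.2.1,
        fun i => (Matrix.fromCols (Matrix.of fun a (_ : Fin 1) => (t.2.2 i).1 a)
            ((t.2.2 i).2.1),
          (t.2.2 i).2.2))
        ∈ CMP (SetProd {v : Fin 1 → ℝ | 0 ≤ v 0} K₀) Ki)} := by
  apply Set.Subset.antisymm
  · -- forward inclusion
    intro p hp
    rw [convexHull_eq] at hp
    obtain ⟨ι, s, w, z, hw, hw1, hz, hsum⟩ := hp
    rw [Finset.centerMass_eq_of_sum_1 _ _ hw1] at hsum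
    choose xx yy hfe hq0 hzeq using fun k : {a // a ∈ s} => hz k.1 k.2
    have hw1' : ∑ k ∈ s.attach, w k.1 = 1 := by
      rw [Finset.sum_attach]; exact hw1
    have hwnn : ∀ k : {a // a ∈ s}, 0 ≤ w k.1 := fun k => hw k.1 k.2
    have hfeas : ∀ (k : {a // a ∈ s}) i, xx k ∈ K₀ ∧ yy k i ∈ Ki i ∧
        (F i) *ᵥ xx k + (G i) *ᵥ yy k i = r i := by
      intro k i
      have := hfe k i
      rw [hFeas i] at this
      exact this
    have hsum' : ∑ k ∈ s.attach, w k.1 • ((xx k, Matrix.vecMulVec (xx k) (xx k),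
        fun i => (yy k i, Matrix.vecMulVec (yy k i) (xx k),
          Matrix.vecMulVec (yy k i) (yy k i))) :
          (Fin n₁ → ℝ) × Matrix (Fin n₁) (Fin n₁) ℝ ×
          (Fin S → (Fin n₂ → ℝ) × Matrix (Fin n₂) (Fin n₁) ℝ × Matrix (Fin n₂) (Fin n₂) ℝ)) = p := by
      rw [← hsum, ← Finset.sum_attach s fun k => w k • z k]
      exact Finset.sum_congr rfl fun k _ => by rw [hzeq k]
    have hp1 : p.1 = ∑ k ∈ s.attach, w k.1 • xx k := by
      rw [← hsum']; simp [Prod.fst_sum, Prod.smul_fst]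
    have hp2 : p.2.1 = ∑ k ∈ s.attach, w k.1 • Matrix.vecMulVec (xx k) (xx k) := by
      rw [← hsum']; simp [Prod.fst_sum, Prod.snd_sum, Prod.smul_fst, Prod.smul_snd]
    have hp3 : ∀ i, (p.2.2 i).1 = ∑ k ∈ s.attach, w k.1 • yy k i := by
      intro i
      rw [← hsum']
      simp [Prod.fst_sum, Prod.snd_sum, Prod.smul_fst, Prod.smul_snd,
        Finset.sum_apply, Pi.smul_apply]
    have hp4 : ∀ i, (p.2.2 i).2.1 = ∑ k ∈ s.attach, w k.1 • Matrix.vecMulVec (yy k i) (xx k) := by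
      intro i
      rw [← hsum']
      simp [Prod.fst_sum, Prod.snd_sum, Prod.smul_fst, Prod.smul_snd,
        Finset.sum_apply, Pi.smul_apply]
    have hp5 : ∀ i, (p.2.2 i).2.2 = ∑ k ∈ s.attach, w k.1 • Matrix.vecMulVec (yy k i) (yy k i) := by
      intro i
      rw [← hsum']
      simp [Prod.fst_sum, Prod.snd_sum, Prod.smul_fst, Prod.smul_snd,
        Finset.sum_apply, Pi.smul_apply]
    refine ⟨?_, ?_, ?_, ?_, ?_, ?_⟩
    · -- symmetry of X
      show (p.2.1)ᵀ = p.2.1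
      rw [hp2, transpose_sum]
      exact Finset.sum_congr rfl fun k _ => by
        rw [transpose_smul, (vecMulVec_isSymm (xx k))]
    · -- symmetry of Y i
      intro i
      show ((p.2.2 i).2.2)ᵀ = (p.2.2 i).2.2
      rw [hp5 i, transpose_sum]
      exact Finset.sum_congr rfl fun k _ => by
        rw [transpose_smul, (vecMulVec_isSymm (yy k i))]
    · -- linear constraint
      intro i
      rw [hp1, hp3 i, mulVec_finsum, mulVec_finsum, ← Finset.sum_add_distrib]
      have : ∀ k ∈ s.attach, (F i) *ᵥ (w k.1 • xx k) + (G i) *ᵥ (w k.1 • yy k i)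
          = w k.1 • r i := by
        intro k _
        rw [mulVec_smul, mulVec_smul, ← smul_add, (hfeas k i).2.2]
      rw [Finset.sum_congr rfl this, ← Finset.sum_smul, hw1', one_smul]
    · -- diagonal constraint
      intro i l
      have hblock : Matrix.fromBlocks p.2.1 ((p.2.2 i).2.1)ᵀ ((p.2.2 i).2.1) ((p.2.2 i).2.2)
          = ∑ k ∈ s.attach, w k.1 • Matrix.vecMulVec
            (Sum.elim (xx k) (yy k i)) (Sum.elim (xx k) (yy k i)) := by
        rw [hp2, hp4 i, hp5 i]
        ext a b
        rcases a with a | a <;> rcases b with b | b <;>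
          simp only [Matrix.fromBlocks_apply₁₁, Matrix.fromBlocks_apply₁₂,
            Matrix.fromBlocks_apply₂₁, Matrix.fromBlocks_apply₂₂,
            Matrix.sum_apply, Matrix.smul_apply, Matrix.transpose_apply,
            Matrix.vecMulVec_apply, Sum.elim_inl, Sum.elim_inr, smul_eq_mul] <;>
          exact Finset.sum_congr rfl fun k _ => by ring
      rw [hblock, Matrix.mul_sum, Matrix.sum_mul]
      have hterm : ∀ k ∈ s.attach,
          Matrix.fromCols (F i) (G i) * (w k.1 • Matrix.vecMulVec
            (Sum.elim (xx k) (yy k i)) (Sum.elim (xx k) (yy k i))) *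
            (Matrix.fromCols (F i) (G i))ᵀ
          = w k.1 • Matrix.vecMulVec (r i) (r i) := by
        intro k _
        rw [Matrix.mul_smul, Matrix.smul_mul, mul_vecMulVec_mul,
          fromCols_mulVec_sumElim, (hfeas k i).2.2]
      rw [Finset.sum_congr rfl hterm, ← Finset.sum_smul, hw1', one_smul,
        Matrix.vecMulVec_apply]
    · -- the quadratic constraint
      intro j
      have e1 : frob (A j) p.2.1 = ∑ k ∈ s.attach, w k.1 * (xx k ⬝ᵥ (A j) *ᵥ xx k) := by
        rw [hp2, frob_sum_smul]
        exact Finset.sum_congr rfl fun k _ => by rw [frob_vecMulVec]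
      have e2 : a j ⬝ᵥ p.1 = ∑ k ∈ s.attach, w k.1 * (a j ⬝ᵥ xx k) := by
        rw [hp1, dot_finsum]
        exact Finset.sum_congr rfl fun k _ => by
          rw [dotProduct_smul, smul_eq_mul]
      have e3 : ∀ i, frob ((B j i)ᵀ) ((p.2.2 i).2.1)
          = ∑ k ∈ s.attach, w k.1 * (xx k ⬝ᵥ (B j i) *ᵥ yy k i) := by
        intro i
        rw [hp4 i, frob_sum_smul]
        refine Finset.sum_congr rfl fun k _ => ?_
        rw [frob_vecMulVec, dotProduct_mulVec, vecMul_transpose, dotProduct_comm]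
      have e4 : ∀ i, frob (C j i) ((p.2.2 i).2.2)
          = ∑ k ∈ s.attach, w k.1 * (yy k i ⬝ᵥ (C j i) *ᵥ yy k i) := by
        intro i
        rw [hp5 i, frob_sum_smul]
        exact Finset.sum_congr rfl fun k _ => by rw [frob_vecMulVec]
      have e5 : ∀ i, c j i ⬝ᵥ (p.2.2 i).1 = ∑ k ∈ s.attach, w k.1 * (c j i ⬝ᵥ yy k i) := by
        intro i
        rw [hp3 i, dot_finsum]
        exact Finset.sum_congr rfl fun k _ => by rw [dotProduct_smul, smul_eq_mul]
      have e6 : (d j : ℝ) = ∑ k ∈ s.attach, w k.1 * d j := by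
        rw [← Finset.sum_mul, hw1', one_mul]
      have emid : (∑ i, (frob ((B j i)ᵀ) ((p.2.2 i).2.1) + frob (C j i) ((p.2.2 i).2.2) +
            c j i ⬝ᵥ (p.2.2 i).1))
          = ∑ k ∈ s.attach, w k.1 * (∑ i, (xx k ⬝ᵥ (B j i) *ᵥ yy k i +
            yy k i ⬝ᵥ (C j i) *ᵥ yy k i + c j i ⬝ᵥ yy k i)) := by
        have : ∀ i : Fin S, frob ((B j i)ᵀ) ((p.2.2 i).2.1) + frob (C j i) ((p.2.2 i).2.2) +
            c j i ⬝ᵥ (p.2.2 i).1 = ∑ k ∈ s.attach, w k.1 * (xx k ⬝ᵥ (B j i) *ᵥ yy k i +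
            yy k i ⬝ᵥ (C j i) *ᵥ yy k i + c j i ⬝ᵥ yy k i) := by
          intro i
          rw [e3 i, e4 i, e5 i, ← Finset.sum_add_distrib, ← Finset.sum_add_distrib]
          exact Finset.sum_congr rfl fun k _ => by ring
        rw [Finset.sum_congr rfl fun i _ => this i, Finset.sum_comm]
        exact Finset.sum_congr rfl fun k _ => by rw [Finset.mul_sum]
      rw [e1, e2, emid]
      conv_lhs => rw [e6]
      rw [← Finset.sum_add_distrib, ← Finset.sum_add_distrib, ← Finset.sum_add_distrib]
      refine Finset.sum_eq_zero fun k _ => ?_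
      have hq := hq0 k j
      rw [hQ] at hq
      linear_combination (w k.1) * hq
    · -- CMP membership
      have pair_sum : ∑ k ∈ s.attach, w k.1 •
            ((Matrix.vecMulVec (Sum.elim (fun _ => (1:ℝ)) (xx k)) (Sum.elim (fun _ => (1:ℝ)) (xx k)),
              fun i => (Matrix.vecMulVec (yy k i) (Sum.elim (fun _ => (1:ℝ)) (xx k)),
                Matrix.vecMulVec (yy k i) (yy k i))) :
            Matrix (Fin 1 ⊕ Fin n₁) (Fin 1 ⊕ Fin n₁) ℝ ×
            (Fin S → Matrix (Fin n₂) (Fin 1 ⊕ Fin n₁) ℝ × Matrix (Fin n₂) (Fin n₂) ℝ))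
          = (∑ k ∈ s.attach, w k.1 • Matrix.vecMulVec (Sum.elim (fun _ => (1:ℝ)) (xx k))
              (Sum.elim (fun _ => (1:ℝ)) (xx k)),
             fun i => (∑ k ∈ s.attach, w k.1 • Matrix.vecMulVec (yy k i)
                (Sum.elim (fun _ => (1:ℝ)) (xx k)),
               ∑ k ∈ s.attach, w k.1 • Matrix.vecMulVec (yy k i) (yy k i))) := by
        refine Prod.ext ?_ (funext fun i => Prod.ext ?_ ?_) <;>
          simp [Prod.fst_sum, Prod.snd_sum, Prod.smul_fst, Prod.smul_snd,
            Finset.sum_apply, Pi.smul_apply]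
      have c1 : Matrix.fromBlocks (Matrix.of fun (_ _ : Fin 1) => (1 : ℝ))
          (Matrix.of fun (_ : Fin 1) j => p.1 j)
          (Matrix.of fun i (_ : Fin 1) => p.1 i) p.2.1
          = ∑ k ∈ s.attach, w k.1 • Matrix.vecMulVec (Sum.elim (fun _ => (1:ℝ)) (xx k))
            (Sum.elim (fun _ => (1:ℝ)) (xx k)) := by
        ext e f
        rcases e with e | e <;> rcases f with f | f
        · simp only [Matrix.fromBlocks_apply₁₁, Matrix.of_apply, Matrix.sum_apply,
            Matrix.smul_apply, Matrix.vecMulVec_apply, Sum.elim_inl, smul_eq_mul, mul_one]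
          exact hw1'.symm
        · simp only [Matrix.fromBlocks_apply₁₂, Matrix.of_apply, Matrix.sum_apply,
            Matrix.smul_apply, Matrix.vecMulVec_apply, Sum.elim_inl, Sum.elim_inr,
            smul_eq_mul, one_mul, hp1, Finset.sum_apply, Pi.smul_apply]
        · simp only [Matrix.fromBlocks_apply₂₁, Matrix.of_apply, Matrix.sum_apply,
            Matrix.smul_apply, Matrix.vecMulVec_apply, Sum.elim_inl, Sum.elim_inr,
            smul_eq_mul, mul_one, hp1, Finset.sum_apply, Pi.smul_apply]
        · simp only [Matrix.fromBlocks_apply₂₂, Matrix.sum_apply, Matrix.smul_apply,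
            Matrix.vecMulVec_apply, Sum.elim_inr, smul_eq_mul, hp2, Finset.sum_apply,
            Pi.smul_apply]
      have c2 : ∀ i, Matrix.fromCols (Matrix.of fun a (_ : Fin 1) => (p.2.2 i).1 a)
          ((p.2.2 i).2.1)
          = ∑ k ∈ s.attach, w k.1 • Matrix.vecMulVec (yy k i)
            (Sum.elim (fun _ => (1:ℝ)) (xx k)) := by
        intro i
        ext e f
        rcases f with f | f
        · simp only [Matrix.fromCols_apply_inl, Matrix.of_apply, Matrix.sum_apply,
            Matrix.smul_apply, Matrix.vecMulVec_apply, Sum.elim_inl, smul_eq_mul, mul_one,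
            hp3 i, Finset.sum_apply, Pi.smul_apply]
        · simp only [Matrix.fromCols_apply_inr, Matrix.sum_apply, Matrix.smul_apply,
            Matrix.vecMulVec_apply, Sum.elim_inr, smul_eq_mul, hp4 i, Finset.sum_apply,
            Pi.smul_apply]
      have htuple : ((Matrix.fromBlocks (Matrix.of fun (_ _ : Fin 1) => (1 : ℝ))
          (Matrix.of fun (_ : Fin 1) j => p.1 j)
          (Matrix.of fun i (_ : Fin 1) => p.1 i) p.2.1,
          fun i => (Matrix.fromCols (Matrix.of fun a (_ : Fin 1) => (p.2.2 i).1 a)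
            ((p.2.2 i).2.1), (p.2.2 i).2.2)) :
          Matrix (Fin 1 ⊕ Fin n₁) (Fin 1 ⊕ Fin n₁) ℝ ×
          (Fin S → Matrix (Fin n₂) (Fin 1 ⊕ Fin n₁) ℝ × Matrix (Fin n₂) (Fin n₂) ℝ))
          = ∑ k ∈ s.attach, w k.1 •
            ((Matrix.vecMulVec (Sum.elim (fun _ => (1:ℝ)) (xx k)) (Sum.elim (fun _ => (1:ℝ)) (xx k)),
              fun i => (Matrix.vecMulVec (yy k i) (Sum.elim (fun _ => (1:ℝ)) (xx k)),
                Matrix.vecMulVec (yy k i) (yy k i))) :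
            Matrix (Fin 1 ⊕ Fin n₁) (Fin 1 ⊕ Fin n₁) ℝ ×
            (Fin S → Matrix (Fin n₂) (Fin 1 ⊕ Fin n₁) ℝ × Matrix (Fin n₂) (Fin n₂) ℝ)) := by
        refine Eq.trans ?_ pair_sum.symm
        exact Prod.ext c1 (funext fun i => Prod.ext (c2 i) (hp5 i))
      rw [htuple]
      refine Convex.sum_mem (convex_convexHull ℝ _) (fun k _ => hwnn k) hw1' fun k _ => ?_
      refine subset_convexHull ℝ _ ?_
      refine ⟨Sum.elim (fun _ => (1:ℝ)) (xx k), ⟨?_, ?_⟩, yy k, fun i => (hfeas k i).2.1, rfl⟩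
      · show (0:ℝ) ≤ 1
        norm_num
      · show (fun j => Sum.elim (fun _ => (1:ℝ)) (xx k) (Sum.inr j)) ∈ K₀
        exact (hfeas k ⟨0, hS⟩).1
  · -- reverse inclusion
    intro p hp
    classical
    obtain ⟨hsym1, hsym2, hlin, hdiag, hfrob, hcmp⟩ := hp
    unfold CMP at hcmp
    rw [convexHull_eq] at hcmp
    obtain ⟨ι, s, w, z, hw, hw1, hz, hsum⟩ := hcmp
    rw [Finset.centerMass_eq_of_sum_1 _ _ hw1] at hsum
    choose ξ hξ η hη hzeq using fun k : {a // a ∈ s} => hz k.1 k.2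
    have hw1' : ∑ k ∈ s.attach, w k.1 = 1 := by
      rw [Finset.sum_attach]; exact hw1
    have hwnn : ∀ k : {a // a ∈ s}, 0 ≤ w k.1 := fun k => hw k.1 k.2
    set tk : {a // a ∈ s} → ℝ := fun k => ξ k (Sum.inl 0) with htk
    set u : {a // a ∈ s} → (Fin n₁ → ℝ) := fun k => fun jx => ξ k (Sum.inr jx) with hu
    have htknn : ∀ k, 0 ≤ tk k := fun k => (hξ k).1
    have huK : ∀ k, u k ∈ K₀ := fun k => (hξ k).2
    have hsum' : ∑ k ∈ s.attach, w k.1 •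
        ((Matrix.vecMulVec (ξ k) (ξ k),
          fun i => (Matrix.vecMulVec (η k i) (ξ k), Matrix.vecMulVec (η k i) (η k i))) :
          Matrix (Fin 1 ⊕ Fin n₁) (Fin 1 ⊕ Fin n₁) ℝ ×
          (Fin S → Matrix (Fin n₂) (Fin 1 ⊕ Fin n₁) ℝ × Matrix (Fin n₂) (Fin n₂) ℝ))
        = (Matrix.fromBlocks (Matrix.of fun (_ _ : Fin 1) => (1 : ℝ))
            (Matrix.of fun (_ : Fin 1) j => p.1 j)
            (Matrix.of fun i (_ : Fin 1) => p.1 i) p.2.1,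
          fun i => (Matrix.fromCols (Matrix.of fun e (_ : Fin 1) => (p.2.2 i).1 e)
            ((p.2.2 i).2.1), (p.2.2 i).2.2)) := by
      rw [← hsum, ← Finset.sum_attach s fun k => w k • z k]
      exact Finset.sum_congr rfl fun k _ => by rw [hzeq k]
    have hE1 : Matrix.fromBlocks (Matrix.of fun (_ _ : Fin 1) => (1 : ℝ))
        (Matrix.of fun (_ : Fin 1) j => p.1 j)
        (Matrix.of fun i (_ : Fin 1) => p.1 i) p.2.1
        = ∑ k ∈ s.attach, w k.1 • Matrix.vecMulVec (ξ k) (ξ k) := by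
      have h := congrArg Prod.fst hsum'.symm
      simpa [Prod.fst_sum, Prod.smul_fst] using h
    have hE2 : ∀ i, Matrix.fromCols (Matrix.of fun e (_ : Fin 1) => (p.2.2 i).1 e)
        ((p.2.2 i).2.1)
        = ∑ k ∈ s.attach, w k.1 • Matrix.vecMulVec (η k i) (ξ k) := by
      intro i
      have h := congrArg (fun q : Matrix (Fin 1 ⊕ Fin n₁) (Fin 1 ⊕ Fin n₁) ℝ ×
          (Fin S → Matrix (Fin n₂) (Fin 1 ⊕ Fin n₁) ℝ × Matrix (Fin n₂) (Fin n₂) ℝ) =>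
          (q.2 i).1) hsum'.symm
      simpa [Prod.fst_sum, Prod.snd_sum, Prod.smul_fst, Prod.smul_snd,
        Finset.sum_apply, Pi.smul_apply] using h
    have hE3 : ∀ i, (p.2.2 i).2.2
        = ∑ k ∈ s.attach, w k.1 • Matrix.vecMulVec (η k i) (η k i) := by
      intro i
      have h := congrArg (fun q : Matrix (Fin 1 ⊕ Fin n₁) (Fin 1 ⊕ Fin n₁) ℝ ×
          (Fin S → Matrix (Fin n₂) (Fin 1 ⊕ Fin n₁) ℝ × Matrix (Fin n₂) (Fin n₂) ℝ) =>
          (q.2 i).2) hsum'.symm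
      simpa [Prod.fst_sum, Prod.snd_sum, Prod.smul_fst, Prod.smul_snd,
        Finset.sum_apply, Pi.smul_apply] using h
    have e11 : ∑ k ∈ s.attach, w k.1 * (tk k * tk k) = 1 := by
      have h := congrFun (congrFun hE1 (Sum.inl 0)) (Sum.inl 0)
      simpa [Matrix.fromBlocks_apply₁₁, Matrix.sum_apply, Matrix.smul_apply,
        Matrix.vecMulVec_apply, smul_eq_mul] using h.symm
    have hx_eq : p.1 = ∑ k ∈ s.attach, (w k.1 * tk k) • u k := by
      funext jx
      have h := congrFun (congrFun hE1 (Sum.inr jx)) (Sum.inl 0)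
      simp only [Matrix.fromBlocks_apply₂₁, Matrix.of_apply, Matrix.sum_apply,
        Matrix.smul_apply, Matrix.vecMulVec_apply, smul_eq_mul] at h
      rw [h, Finset.sum_apply]
      exact Finset.sum_congr rfl fun k _ => by simp [Pi.smul_apply]; ring
    have hX_eq : p.2.1 = ∑ k ∈ s.attach, w k.1 • Matrix.vecMulVec (u k) (u k) := by
      ext e f
      have h := congrFun (congrFun hE1 (Sum.inr e)) (Sum.inr f)
      simpa [Matrix.fromBlocks_apply₂₂, Matrix.sum_apply, Matrix.smul_apply,
        Matrix.vecMulVec_apply, smul_eq_mul] using h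
    have hy_eq : ∀ i, (p.2.2 i).1 = ∑ k ∈ s.attach, (w k.1 * tk k) • η k i := by
      intro i
      funext e
      have h := congrFun (congrFun (hE2 i) e) (Sum.inl 0)
      simp only [Matrix.fromCols_apply_inl, Matrix.of_apply, Matrix.sum_apply,
        Matrix.smul_apply, Matrix.vecMulVec_apply, smul_eq_mul] at h
      rw [h, Finset.sum_apply]
      exact Finset.sum_congr rfl fun k _ => by simp [Pi.smul_apply]; ring
    have hZ_eq : ∀ i, (p.2.2 i).2.1
        = ∑ k ∈ s.attach, w k.1 • Matrix.vecMulVec (η k i) (u k) := by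
      intro i
      ext e f
      have h := congrFun (congrFun (hE2 i) e) (Sum.inr f)
      simpa [Matrix.fromCols_apply_inr, Matrix.sum_apply, Matrix.smul_apply,
        Matrix.vecMulVec_apply, smul_eq_mul] using h
    -- the Cauchy–Schwarz step: each atom satisfies the linear constraint scaled
    have hprop : ∀ k : {a // a ∈ s}, w k.1 ≠ 0 → ∀ i,
        (F i) *ᵥ u k + (G i) *ᵥ η k i = tk k • r i := by
      intro k hk i
      have hvecs : (F i) *ᵥ p.1 + (G i) *ᵥ (p.2.2 i).1
          = ∑ k ∈ s.attach, (w k.1 * tk k) • ((F i) *ᵥ u k + (G i) *ᵥ η k i) := by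
        rw [hx_eq, hy_eq i, mulVec_finsum, mulVec_finsum, ← Finset.sum_add_distrib]
        exact Finset.sum_congr rfl fun k _ => by
          rw [mulVec_smul, mulVec_smul, smul_add]
      have hαβ : ∀ l, ∑ k ∈ s.attach,
          w k.1 * (tk k * (((F i) *ᵥ u k + (G i) *ᵥ η k i) l)) = r i l := by
        intro l
        have h := congrFun (hvecs.symm.trans (hlin i)) l
        rw [Finset.sum_apply] at h
        rw [← h]
        exact Finset.sum_congr rfl fun k _ => by simp [Pi.smul_apply]; ring
      have hblock : Matrix.fromBlocks p.2.1 ((p.2.2 i).2.1)ᵀ ((p.2.2 i).2.1) ((p.2.2 i).2.2)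
          = ∑ k ∈ s.attach, w k.1 • Matrix.vecMulVec
            (Sum.elim (u k) (η k i)) (Sum.elim (u k) (η k i)) := by
        rw [hX_eq, hZ_eq i, hE3 i]
        ext e f
        rcases e with e | e <;> rcases f with f | f <;>
          simp only [Matrix.fromBlocks_apply₁₁, Matrix.fromBlocks_apply₁₂,
            Matrix.fromBlocks_apply₂₁, Matrix.fromBlocks_apply₂₂,
            Matrix.sum_apply, Matrix.smul_apply, Matrix.transpose_apply,
            Matrix.vecMulVec_apply, Sum.elim_inl, Sum.elim_inr, smul_eq_mul] <;>
          exact Finset.sum_congr rfl fun k _ => by ring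
      have hββmat : Matrix.fromCols (F i) (G i) *
          Matrix.fromBlocks p.2.1 ((p.2.2 i).2.1)ᵀ ((p.2.2 i).2.1) ((p.2.2 i).2.2) *
          (Matrix.fromCols (F i) (G i))ᵀ
          = ∑ k ∈ s.attach, w k.1 • Matrix.vecMulVec
            ((F i) *ᵥ u k + (G i) *ᵥ η k i) ((F i) *ᵥ u k + (G i) *ᵥ η k i) := by
        rw [hblock, Matrix.mul_sum, Matrix.sum_mul]
        exact Finset.sum_congr rfl fun k _ => by
          rw [Matrix.mul_smul, Matrix.smul_mul, mul_vecMulVec_mul,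
            fromCols_mulVec_sumElim]
      have hββ : ∀ l, ∑ k ∈ s.attach,
          w k.1 * ((((F i) *ᵥ u k + (G i) *ᵥ η k i) l) * (((F i) *ᵥ u k + (G i) *ᵥ η k i) l))
          = r i l * r i l := by
        intro l
        have h := (congrFun (congrFun hββmat.symm l) l).trans (hdiag i l)
        rw [Matrix.sum_apply] at h
        rw [← h]
        exact Finset.sum_congr rfl fun k _ => by
          simp [Matrix.smul_apply, Matrix.vecMulVec_apply]
      funext l
      have := weighted_cs s.attach (fun k => w k.1) tk
        (fun k => ((F i) *ᵥ u k + (G i) *ᵥ η k i) l) (fun k _ => hwnn k) (r i l)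
        e11 (hαβ l) (hββ l) k (Finset.mem_attach s k) hk
      have h2 : ((F i) *ᵥ u k + (G i) *ᵥ η k i) l = r i l * tk k := this
      rw [Pi.smul_apply, smul_eq_mul, h2]; ring
    -- atoms with tk = 0 vanish
    have hzero : ∀ k : {a // a ∈ s}, w k.1 ≠ 0 → tk k = 0 →
        u k = 0 ∧ ∀ i, η k i = 0 := by
      intro k hk ht0
      have hdir : ∀ i, (F i) *ᵥ u k + (G i) *ᵥ η k i = 0 := by
        intro i
        rw [hprop k hk i, ht0, zero_smul]
      have hz0 : ∀ i : Fin S, ((u k, η k i) : (Fin n₁ → ℝ) × (Fin n₂ → ℝ)) = 0 := by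
        intro i
        obtain ⟨p₀, hp₀⟩ := hFne i
        refine ray_zero (hFbdd i) (p := p₀) (v := (u k, η k i)) ?_
        intro cc hcc
        rw [hFeas i] at hp₀ ⊢
        obtain ⟨h1, h2, h3⟩ := hp₀
        refine ⟨?_, ?_, ?_⟩
        · show p₀.1 + cc • u k ∈ K₀
          exact cone_add hK₀cone hK₀conv h1 (hK₀cone cc hcc _ (huK k))
        · show p₀.2 + cc • η k i ∈ Ki i
          exact cone_add (hKicone i) (hKiconv i) h2 (hKicone i cc hcc _ (hη k i))
        · show (F i) *ᵥ (p₀.1 + cc • u k) + (G i) *ᵥ (p₀.2 + cc • η k i) = r i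
          rw [mulVec_add, mulVec_add, mulVec_smul, mulVec_smul]
          have h4 : cc • ((F i) *ᵥ u k) + cc • ((G i) *ᵥ η k i) = 0 := by
            rw [← smul_add, hdir i, smul_zero]
          have h5 : (F i) *ᵥ p₀.1 + cc • ((F i) *ᵥ u k) +
              ((G i) *ᵥ p₀.2 + cc • ((G i) *ᵥ η k i))
              = ((F i) *ᵥ p₀.1 + (G i) *ᵥ p₀.2) +
                (cc • ((F i) *ᵥ u k) + cc • ((G i) *ᵥ η k i)) := by abel
          rw [h5, h3, h4, add_zero]
      constructor
      · have := hz0 ⟨0, hS⟩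
        exact congrArg Prod.fst this
      · intro i
        exact congrArg Prod.snd (hz0 i)
    -- scaled atoms
    set x' : {a // a ∈ s} → (Fin n₁ → ℝ) := fun k => (tk k)⁻¹ • u k with hx'
    set y' : {a // a ∈ s} → Fin S → (Fin n₂ → ℝ) := fun k i => (tk k)⁻¹ • η k i with hy'
    have hpos : ∀ k : {a // a ∈ s}, w k.1 ≠ 0 → tk k ≠ 0 → ∀ i,
        ((x' k, y' k i) : (Fin n₁ → ℝ) × (Fin n₂ → ℝ)) ∈ Feas i := by
      intro k hk ht i
      rw [hFeas i]
      refine ⟨hK₀cone _ (inv_nonneg.2 (htknn k)) _ (huK k),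
        hKicone i _ (inv_nonneg.2 (htknn k)) _ (hη k i), ?_⟩
      show (F i) *ᵥ ((tk k)⁻¹ • u k) + (G i) *ᵥ ((tk k)⁻¹ • η k i) = r i
      rw [mulVec_smul, mulVec_smul, ← smul_add, hprop k hk i, smul_smul,
        inv_mul_cancel₀ ht, one_smul]
    have hscale : ∀ k : {a // a ∈ s}, w k.1 ≠ 0 →
        u k = tk k • x' k ∧ ∀ i, η k i = tk k • y' k i := by
      intro k hk
      rcases eq_or_ne (tk k) 0 with ht | ht
      · obtain ⟨hu0, hη0⟩ := hzero k hk ht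
        exact ⟨by rw [hu0, ht, zero_smul], fun i => by rw [hη0 i, ht, zero_smul]⟩
      · exact ⟨(smul_inv_smul₀ ht (u k)).symm, fun i => (smul_inv_smul₀ ht (η k i)).symm⟩
    -- quadratic equality per atom
    have hQat : ∀ j k, w k.1 ≠ 0 → tk k ≠ 0 → Q j (x' k) (y' k) = 0 := by
      intro j
      have E1 : frob (A j) p.2.1 = ∑ k ∈ s.attach, w k.1 * (u k ⬝ᵥ (A j) *ᵥ u k) := by
        rw [hX_eq, frob_sum_smul]
        exact Finset.sum_congr rfl fun k _ => by rw [frob_vecMulVec]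
      have E2 : a j ⬝ᵥ p.1 = ∑ k ∈ s.attach, (w k.1 * tk k) * (a j ⬝ᵥ u k) := by
        rw [hx_eq, dot_finsum]
        exact Finset.sum_congr rfl fun k _ => by
          rw [dotProduct_smul, smul_eq_mul]
      have E3 : ∀ i, frob ((B j i)ᵀ) ((p.2.2 i).2.1)
          = ∑ k ∈ s.attach, w k.1 * (u k ⬝ᵥ (B j i) *ᵥ η k i) := by
        intro i
        rw [hZ_eq i, frob_sum_smul]
        refine Finset.sum_congr rfl fun k _ => ?_
        rw [frob_vecMulVec, dotProduct_mulVec, vecMul_transpose, dotProduct_comm]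
      have E4 : ∀ i, frob (C j i) ((p.2.2 i).2.2)
          = ∑ k ∈ s.attach, w k.1 * (η k i ⬝ᵥ (C j i) *ᵥ η k i) := by
        intro i
        rw [hE3 i, frob_sum_smul]
        exact Finset.sum_congr rfl fun k _ => by rw [frob_vecMulVec]
      have E5 : ∀ i, c j i ⬝ᵥ (p.2.2 i).1
          = ∑ k ∈ s.attach, (w k.1 * tk k) * (c j i ⬝ᵥ η k i) := by
        intro i
        rw [hy_eq i, dot_finsum]
        exact Finset.sum_congr rfl fun k _ => by
          rw [dotProduct_smul, smul_eq_mul]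
      have E6 : (d j : ℝ) = ∑ k ∈ s.attach, (w k.1 * (tk k * tk k)) * d j := by
        rw [← Finset.sum_mul, e11, one_mul]
      have Emid : (∑ i, (frob ((B j i)ᵀ) ((p.2.2 i).2.1) + frob (C j i) ((p.2.2 i).2.2) +
            c j i ⬝ᵥ (p.2.2 i).1))
          = ∑ k ∈ s.attach, w k.1 * (∑ i, (u k ⬝ᵥ (B j i) *ᵥ η k i +
            η k i ⬝ᵥ (C j i) *ᵥ η k i + tk k * (c j i ⬝ᵥ η k i))) := by
        have h : ∀ i : Fin S, frob ((B j i)ᵀ) ((p.2.2 i).2.1) + frob (C j i) ((p.2.2 i).2.2) +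
            c j i ⬝ᵥ (p.2.2 i).1
            = ∑ k ∈ s.attach, w k.1 * (u k ⬝ᵥ (B j i) *ᵥ η k i +
              η k i ⬝ᵥ (C j i) *ᵥ η k i + tk k * (c j i ⬝ᵥ η k i)) := by
          intro i
          rw [E3 i, E4 i, E5 i, ← Finset.sum_add_distrib, ← Finset.sum_add_distrib]
          exact Finset.sum_congr rfl fun k _ => by ring
        rw [Finset.sum_congr rfl fun i _ => h i, Finset.sum_comm]
        exact Finset.sum_congr rfl fun k _ => by rw [Finset.mul_sum]
      have hfj := hfrob j
      rw [E1, E2, Emid] at hfj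
      conv_lhs at hfj => rw [E6]
      rw [← Finset.sum_add_distrib, ← Finset.sum_add_distrib, ← Finset.sum_add_distrib] at hfj
      have hform : ∀ k : {a // a ∈ s},
          w k.1 * (u k ⬝ᵥ (A j) *ᵥ u k) + (w k.1 * tk k) * (a j ⬝ᵥ u k) +
            w k.1 * (∑ i, (u k ⬝ᵥ (B j i) *ᵥ η k i +
              η k i ⬝ᵥ (C j i) *ᵥ η k i + tk k * (c j i ⬝ᵥ η k i))) +
            (w k.1 * (tk k * tk k)) * d j
          = w k.1 * ((tk k * tk k) * Q j (x' k) (y' k)) := by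
        intro k
        rcases eq_or_ne (w k.1) 0 with hk | hk
        · rw [hk]; ring
        · obtain ⟨hus, hηs⟩ := hscale k hk
          have hmid : ∀ i : Fin S, u k ⬝ᵥ (B j i) *ᵥ η k i +
              η k i ⬝ᵥ (C j i) *ᵥ η k i + tk k * (c j i ⬝ᵥ η k i)
              = (tk k * tk k) * (x' k ⬝ᵥ (B j i) *ᵥ y' k i +
                y' k i ⬝ᵥ (C j i) *ᵥ y' k i + c j i ⬝ᵥ y' k i) := by
            intro i
            rw [hus, hηs i]
            simp only [mulVec_smul, dotProduct_smul, smul_dotProduct,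
              smul_eq_mul]
            ring
          rw [hQ]
          rw [Finset.sum_congr rfl fun i _ => hmid i, ← Finset.mul_sum]
          rw [hus]
          simp only [mulVec_smul, dotProduct_smul, smul_dotProduct, smul_eq_mul]
          ring
      rw [Finset.sum_congr rfl fun k _ => hform k] at hfj
      have hnn : ∀ k ∈ s.attach, 0 ≤ w k.1 * ((tk k * tk k) * Q j (x' k) (y' k)) := by
        intro k _
        rcases eq_or_ne (w k.1) 0 with hk | hk
        · rw [hk]; simp
        · rcases eq_or_ne (tk k) 0 with ht | ht
          · rw [ht]; simp
          · have hQnn := hQnonneg (x' k) (y' k) (fun i => hpos k hk ht i) j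
            exact mul_nonneg (hwnn k) (mul_nonneg (mul_self_nonneg _) hQnn)
      intro k hk ht
      have hterm := (Finset.sum_eq_zero_iff_of_nonneg hnn).1 hfj k (Finset.mem_attach s k)
      rcases mul_eq_zero.1 hterm with h | h
      · exact absurd h hk
      · rcases mul_eq_zero.1 h with h' | h'
        · exact absurd h' (mul_ne_zero ht ht)
        · exact h'
    -- final assembly
    set ω : {a // a ∈ s} → ℝ := fun k => w k.1 * (tk k * tk k) with hω
    set Pt : {a // a ∈ s} → ((Fin n₁ → ℝ) × Matrix (Fin n₁) (Fin n₁) ℝ ×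
        (Fin S → (Fin n₂ → ℝ) × Matrix (Fin n₂) (Fin n₁) ℝ × Matrix (Fin n₂) (Fin n₂) ℝ)) :=
      fun k => (x' k, Matrix.vecMulVec (x' k) (x' k),
        fun i => (y' k i, Matrix.vecMulVec (y' k i) (x' k),
          Matrix.vecMulVec (y' k i) (y' k i))) with hPt
    have hsplit : ∀ k : {a // a ∈ s}, ω k ≠ 0 → w k.1 ≠ 0 ∧ tk k ≠ 0 := by
      intro k hk
      constructor
      · intro h; exact hk (by rw [hω]; simp [h])
      · intro h; exact hk (by rw [hω]; simp [h])
    have hωnn : ∀ k : {a // a ∈ s}, 0 ≤ ω k :=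
      fun k => mul_nonneg (hwnn k) (mul_self_nonneg _)
    have hsum1 : ∑ k ∈ s.attach.filter (fun k => ω k ≠ 0), ω k = 1 := by
      rw [Finset.sum_filter_ne_zero]
      exact e11
    have hfull : ∑ k ∈ s.attach, ω k • Pt k = p := by
      have c1 : (∑ k ∈ s.attach, ω k • Pt k).1 = p.1 := by
        rw [hx_eq]
        simp only [Prod.fst_sum, Prod.smul_fst, hPt]
        refine Finset.sum_congr rfl fun k _ => ?_
        rcases eq_or_ne (w k.1) 0 with hk | hk
        · simp [hω, hk]
        · rcases eq_or_ne (tk k) 0 with ht | ht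
          · obtain ⟨hu0, hη0⟩ := hzero k hk ht
            simp [hω, ht, hu0]
          · simp only [hω, hx', smul_smul]
            congr 1
            field_simp
            try ring
      have c2 : (∑ k ∈ s.attach, ω k • Pt k).2.1 = p.2.1 := by
        rw [hX_eq]
        simp only [Prod.fst_sum, Prod.snd_sum, Prod.smul_fst, Prod.smul_snd, hPt]
        refine Finset.sum_congr rfl fun k _ => ?_
        rcases eq_or_ne (w k.1) 0 with hk | hk
        · simp [hω, hk]
        · rcases eq_or_ne (tk k) 0 with ht | ht
          · obtain ⟨hu0, hη0⟩ := hzero k hk ht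
            simp [hω, ht, hu0, _root_.zero_vecMulVec]
          · simp only [hω, hx', vecMulVec_smul_smul, smul_smul]
            congr 1
            field_simp
            try ring
      have c3 : ∀ i, ((∑ k ∈ s.attach, ω k • Pt k).2.2 i).1 = (p.2.2 i).1 := by
        intro i
        rw [hy_eq i]
        simp only [Prod.fst_sum, Prod.snd_sum, Prod.smul_fst, Prod.smul_snd,
          Finset.sum_apply, Pi.smul_apply, hPt]
        refine Finset.sum_congr rfl fun k _ => ?_
        rcases eq_or_ne (w k.1) 0 with hk | hk
        · simp [hω, hk]
        · rcases eq_or_ne (tk k) 0 with ht | ht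
          · obtain ⟨hu0, hη0⟩ := hzero k hk ht
            simp [hω, ht, hη0]
          · simp only [hω, hy', smul_smul]
            congr 1
            field_simp
            try ring
      have c4 : ∀ i, ((∑ k ∈ s.attach, ω k • Pt k).2.2 i).2.1 = (p.2.2 i).2.1 := by
        intro i
        rw [hZ_eq i]
        simp only [Prod.fst_sum, Prod.snd_sum, Prod.smul_fst, Prod.smul_snd,
          Finset.sum_apply, Pi.smul_apply, hPt]
        refine Finset.sum_congr rfl fun k _ => ?_
        rcases eq_or_ne (w k.1) 0 with hk | hk
        · simp [hω, hk]
        · rcases eq_or_ne (tk k) 0 with ht | ht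
          · obtain ⟨hu0, hη0⟩ := hzero k hk ht
            simp [hω, ht, hη0, _root_.zero_vecMulVec]
          · simp only [hω, hx', hy', vecMulVec_smul_smul, smul_smul]
            congr 1
            field_simp
            try ring
      have c5 : ∀ i, ((∑ k ∈ s.attach, ω k • Pt k).2.2 i).2.2 = (p.2.2 i).2.2 := by
        intro i
        rw [hE3 i]
        simp only [Prod.fst_sum, Prod.snd_sum, Prod.smul_fst, Prod.smul_snd,
          Finset.sum_apply, Pi.smul_apply, hPt]
        refine Finset.sum_congr rfl fun k _ => ?_
        rcases eq_or_ne (w k.1) 0 with hk | hk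
        · simp [hω, hk]
        · rcases eq_or_ne (tk k) 0 with ht | ht
          · obtain ⟨hu0, hη0⟩ := hzero k hk ht
            simp [hω, ht, hη0, _root_.zero_vecMulVec]
          · simp only [hω, hy', vecMulVec_smul_smul, smul_smul]
            congr 1
            field_simp
            try ring
      exact Prod.ext c1 (Prod.ext c2 (funext fun i => Prod.ext (c3 i)
        (Prod.ext (c4 i) (c5 i))))
    have hfilter : ∑ k ∈ s.attach.filter (fun k => ω k ≠ 0), ω k • Pt k
        = ∑ k ∈ s.attach, ω k • Pt k := by
      refine Finset.sum_filter_of_ne fun k _ h => ?_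
      intro h0
      exact h (by rw [h0, zero_smul])
    rw [← hfull, ← hfilter]
    refine Convex.sum_mem (convex_convexHull ℝ _) (fun k _ => hωnn k) hsum1 fun k hk => ?_
    refine subset_convexHull ℝ _ ?_
    obtain ⟨hwk, htk⟩ := hsplit k (Finset.mem_filter.1 hk).2
    exact ⟨x' k, y' k, fun i => hpos k hwk htk i, fun j => hQat j k hwk htk, rfl⟩
end

section
/- Let n ≥ 1, w ∈ ℝ and y ∈ ℝ^n. If the (n+1)×(n+1) block matrix [[w, yᵀ],[y, y yᵀ]] is positive semidefinite, then w ≥ 1 or y = 0. -/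
open Matrix

theorem stmt_14 (n : ℕ) (hn : 1 ≤ n) (w : ℝ) (y : Fin n → ℝ)
    (h : (Matrix.fromBlocks (Matrix.of fun (_ _ : Fin 1) => w)
        (Matrix.of fun (_ : Fin 1) j => y j) (Matrix.of fun i (_ : Fin 1) => y i)
        (Matrix.vecMulVec y y)).PosSemidef) :
    1 ≤ w ∨ y = 0 := by
  by_cases hy : y = 0
  · exact Or.inr hy
  left
  set c : ℝ := ∑ i, y i * y i with hc
  have hcpos : 0 < c := by
    obtain ⟨i, hi⟩ := Function.ne_iff.mp hy
    apply Finset.sum_pos' (fun j _ => mul_self_nonneg _)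
    exact ⟨i, Finset.mem_univ i, mul_self_pos.mpr (by simpa using hi)⟩
  have key := h.dotProduct_mulVec_nonneg (Sum.elim (fun _ => c) (fun i => -y i))
  simp [Matrix.mulVec, dotProduct, Fintype.sum_sum_type, Matrix.fromBlocks,
    Matrix.vecMulVec, Finset.mul_sum, Finset.sum_mul, mul_comm, mul_assoc, mul_left_comm] at key
  have hz : ∀ x : Fin n, ∑ x1 : Fin n, y x * (y x1 * y x1) = y x * c :=
    fun x => (Finset.mul_sum _ _ _).symm
  simp only [hz, ← hc, add_neg_cancel, mul_zero, Finset.sum_const_zero] at key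
  nlinarith [key, hcpos, mul_pos hcpos hcpos]
end
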